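/- arXiv:1501.00740 — 5 statements merged into one kernel-verified Lean document; each statement's English description precedes it below -/
import Mathlib

section
/- For every integer m ≥ 0 and every complex number z with |z| < 1, one has ln^m(1−z)/(1−z) − ln^m(1+z)/(1+z) = 2·(−1)^m · m! · Σ_{k=0}^{∞} (|S₁(2k+2, m+1)| / (2k+1)!) · z^{2k+1}, where ln denotes the principal branch of the logarithm; the series converges absolutely for |z| < 1. -/
open Finset Filter Real

/-- Unsigned Stirling numbers of the first kind `|S₁(n,l)|`: the coefficients in the
expansion of the rising factorial `z(z+1)⋯(z+n−1) = Σ_l |S₁(n,l)| z^l`. -/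
noncomputable def S1 (n l : ℕ) : ℕ := (ascPochhammer ℕ n).coeff l

lemma S1_zero (l : ℕ) : S1 0 l = if l = 0 then 1 else 0 := by
  simp [S1, ascPochhammer_zero, Polynomial.coeff_one, eq_comm]

lemma S1_one (l : ℕ) : S1 1 l = if l = 1 then 1 else 0 := by
  simp [S1, ascPochhammer_one, Polynomial.coeff_X, eq_comm]

lemma S1_pascal (n l : ℕ) : S1 (n+1) (l+1) = n * S1 n (l+1) + S1 n l := by
  simp only [S1, ascPochhammer_succ_right, mul_add, Polynomial.coeff_add,
    Polynomial.coeff_mul_X, Polynomial.coeff_mul_natCast, Nat.cast_id]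
  ring

lemma S1_n_zero (n : ℕ) : S1 n 0 = if n = 0 then 1 else 0 := by
  cases n with
  | zero => simp [S1_zero]
  | succ n =>
      simp only [S1, Polynomial.coeff_zero_eq_eval_zero,
        Nat.succ_ne_zero, if_false, ascPochhammer_ne_zero_eval_zero (S := ℕ) (Nat.succ_ne_zero n)]

lemma S1_n_one (n : ℕ) : S1 (n+1) 1 = n.factorial := by
  induction n with
  | zero => simp [S1_one]
  | succ n ih =>
      rw [show (1:ℕ) = 0 + 1 from rfl, S1_pascal, ih, S1_n_zero]
      simp [Nat.factorial_succ]

lemma S1_conv (n : ℕ) : ∀ m : ℕ,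
    ∑ j ∈ range (n+1), n.choose j * S1 j m * S1 (n-j) 1 = (m+1) * S1 n (m+1) := by
  induction n with
  | zero => intro m; simp [S1_zero]
  | succ n ih =>
      intro m
      cases m with
      | zero =>
          rw [Finset.sum_eq_single 0]
          · simp [S1_zero]
          · intro j hj hj0
            obtain ⟨j, rfl⟩ := Nat.exists_eq_succ_of_ne_zero hj0
            simp [S1_n_zero]
          · intro h; simp at h
      | succ m' =>
          rw [Finset.sum_range_succ']
          have h0 : (n+1).choose 0 * S1 0 (m'+1) * S1 (n+1-0) 1 = 0 := by
            simp [S1_zero]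
          rw [h0, add_zero]
          have hsplit : ∀ j ∈ range (n+1),
              (n+1).choose (j+1) * S1 (j+1) (m'+1) * S1 (n+1-(j+1)) 1 =
              n.choose j * S1 (j+1) (m'+1) * S1 (n-j) 1
                + n.choose (j+1) * S1 (j+1) (m'+1) * S1 (n-j) 1 := by
            intro j hj
            have hnj : n+1-(j+1) = n-j := by omega
            rw [hnj, Nat.choose_succ_succ]
            ring
          rw [Finset.sum_congr rfl hsplit, Finset.sum_add_distrib]
          have first : ∑ j ∈ range (n+1), n.choose j * S1 (j+1) (m'+1) * S1 (n-j) 1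
              = (∑ j ∈ range (n+1), j * (n.choose j * S1 j (m'+1) * S1 (n-j) 1))
                + (m'+1) * S1 n (m'+1) := by
            rw [← ih m', ← Finset.sum_add_distrib]
            refine Finset.sum_congr rfl fun j hj => ?_
            rw [S1_pascal]
            ring
          have e1 : ∑ j ∈ range (n+1), n.choose (j+1) * S1 (j+1) (m'+1) * S1 (n-j) 1
              = ∑ j ∈ range (n+1), n.choose j * S1 j (m'+1) * S1 (n+1-j) 1 := by
            have h1 := Finset.sum_range_succ'
              (fun j => n.choose j * S1 j (m'+1) * S1 (n+1-j) 1) (n+1)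
            rw [Finset.sum_range_succ
              (fun j => n.choose j * S1 j (m'+1) * S1 (n+1-j) 1) (n+1)] at h1
            simp only [Nat.succ_sub_succ, Nat.choose_succ_self, S1_zero, Nat.succ_ne_zero,
              if_false, mul_zero, zero_mul, add_zero] at h1
            exact h1.symm
          have second : ∑ j ∈ range (n+1), n.choose j * S1 j (m'+1) * S1 (n+1-j) 1
              = (∑ j ∈ range (n+1), (n-j) * (n.choose j * S1 j (m'+1) * S1 (n-j) 1))
                + S1 n (m'+1) := by
            have e2 : ∀ j ∈ range (n+1),
                n.choose j * S1 j (m'+1) * S1 (n+1-j) 1 =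
                (n-j) * (n.choose j * S1 j (m'+1) * S1 (n-j) 1)
                  + n.choose j * S1 j (m'+1) * S1 (n-j) 0 := by
              intro j hj
              have hj' : j ≤ n := by simpa [Nat.lt_succ_iff] using hj
              have h3 : n+1-j = (n-j)+1 := by omega
              rw [h3, S1_pascal]
              ring
            rw [Finset.sum_congr rfl e2, Finset.sum_add_distrib]
            congr 1
            rw [Finset.sum_eq_single n]
            · simp [S1_zero]
            · intro j hj hjn
              have : n - j ≠ 0 := by
                have : j < n + 1 := by simpa using hj
                omega
              simp [S1_n_zero, this]
            · intro h; simp at h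
          rw [first, e1, second]
          have comb : (∑ j ∈ range (n+1), j * (n.choose j * S1 j (m'+1) * S1 (n-j) 1))
              + (∑ j ∈ range (n+1), (n-j) * (n.choose j * S1 j (m'+1) * S1 (n-j) 1))
              = n * ((m'+2) * S1 n (m'+2)) := by
            rw [← Finset.sum_add_distrib, ← ih (m'+1), Finset.mul_sum]
            refine Finset.sum_congr rfl fun j hj => ?_
            have hj' : j ≤ n := by simpa [Nat.lt_succ_iff] using hj
            rw [← add_mul]
            congr 1
            omega
          calc (∑ j ∈ range (n+1), j * (n.choose j * S1 j (m'+1) * S1 (n-j) 1))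
                + (m'+1) * S1 n (m'+1)
                + ((∑ j ∈ range (n+1), (n-j) * (n.choose j * S1 j (m'+1) * S1 (n-j) 1))
                  + S1 n (m'+1))
              = ((∑ j ∈ range (n+1), j * (n.choose j * S1 j (m'+1) * S1 (n-j) 1))
                + (∑ j ∈ range (n+1), (n-j) * (n.choose j * S1 j (m'+1) * S1 (n-j) 1)))
                + ((m'+1) * S1 n (m'+1) + S1 n (m'+1)) := by ring
            _ = n * ((m'+2) * S1 n (m'+2)) + (m'+2) * S1 n (m'+1) := by rw [comb]; ring
            _ = (m'+1+1) * S1 (n+1) (m'+1+1) := by rw [S1_pascal n (m'+1)]; ring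

/-- Complex version of the convolution identity. -/
lemma S1_conv_C (n m : ℕ) :
    ∑ k ∈ range (n+1), ((S1 k m : ℂ)/(k.factorial : ℂ)) * ((S1 (n-k) 1 : ℂ)/((n-k).factorial : ℂ))
      = (m+1) * (S1 n (m+1) : ℂ) / (n.factorial : ℂ) := by
  have h := S1_conv n m
  have h2 : ((∑ j ∈ range (n+1), n.choose j * S1 j m * S1 (n-j) 1 : ℕ) : ℂ)
      = ((m+1) * S1 n (m+1) : ℕ) := by exact_mod_cast congrArg (Nat.cast (R := ℂ)) h
  push_cast at h2
  calc ∑ k ∈ range (n+1), ((S1 k m : ℂ)/(k.factorial : ℂ)) * ((S1 (n-k) 1 : ℂ)/((n-k).factorial : ℂ))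
      = ∑ k ∈ range (n+1), ((n.choose k : ℂ) * (S1 k m : ℂ) * (S1 (n-k) 1 : ℂ))/(n.factorial : ℂ) := by
        refine Finset.sum_congr rfl fun k hk => ?_
        have hk' : k ≤ n := by simpa [Nat.lt_succ_iff] using hk
        have hfac : (n.choose k : ℂ) * (k.factorial : ℂ) * ((n-k).factorial : ℂ)
            = (n.factorial : ℂ) := by
          exact_mod_cast congrArg (Nat.cast (R := ℂ))
            (Nat.choose_mul_factorial_mul_factorial hk')
        have hk1 : (k.factorial : ℂ) ≠ 0 := Nat.cast_ne_zero.mpr k.factorial_ne_zero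
        have hk2 : ((n-k).factorial : ℂ) ≠ 0 := Nat.cast_ne_zero.mpr (n-k).factorial_ne_zero
        have hk3 : (n.factorial : ℂ) ≠ 0 := Nat.cast_ne_zero.mpr n.factorial_ne_zero
        rw [div_mul_div_comm, div_eq_div_iff (mul_ne_zero hk1 hk2) hk3, ← hfac]
        ring
    _ = (∑ k ∈ range (n+1), (n.choose k : ℂ) * (S1 k m : ℂ) * (S1 (n-k) 1 : ℂ))/(n.factorial : ℂ) := by
        rw [Finset.sum_div]
    _ = (m+1) * (S1 n (m+1) : ℂ) / (n.factorial : ℂ) := by rw [h2]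

/-- Partial sum identity. -/
lemma S1_partial (m : ℕ) (n : ℕ) :
    ∑ j ∈ range (n+1), (S1 j m : ℂ)/(j.factorial : ℂ)
      = (S1 (n+1) (m+1) : ℂ) / (n.factorial : ℂ) := by
  induction n with
  | zero =>
      cases m <;> simp [S1_zero, S1_one]
  | succ n ih =>
      rw [Finset.sum_range_succ, ih]
      have hp : S1 (n+2) (m+1) = (n+1) * S1 (n+1) (m+1) + S1 (n+1) m := S1_pascal (n+1) m
      have h1 : (n.factorial : ℂ) ≠ 0 := Nat.cast_ne_zero.mpr n.factorial_ne_zero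
      have h2 : ((n+1).factorial : ℂ) ≠ 0 := Nat.cast_ne_zero.mpr (n+1).factorial_ne_zero
      have hn1 : ((n:ℂ)+1) ≠ 0 := Nat.cast_add_one_ne_zero n
      have hfs : (((n+1).factorial : ℕ) : ℂ) = ((n:ℂ)+1) * (n.factorial : ℂ) := by
        rw [Nat.factorial_succ]; push_cast; ring
      rw [show n+1+1 = n+2 from rfl, hp, hfs]
      push_cast
      field_simp

/-- EGF of the columns of unsigned Stirling numbers of the first kind. -/
lemma S1_egf (m : ℕ) (z : ℂ) (hz : ‖z‖ < 1) :
    HasSum (fun n : ℕ => (S1 n m : ℂ)/(n.factorial : ℂ) * z^n)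
      ((-Complex.log (1-z))^m / (m.factorial : ℂ)) ∧
    Summable (fun n : ℕ => ‖(S1 n m : ℂ)/(n.factorial : ℂ) * z^n‖) := by
  induction m with
  | zero =>
      have hfun : (fun n : ℕ => (S1 n 0 : ℂ)/(n.factorial : ℂ) * z^n)
          = fun n : ℕ => if n = 0 then (1:ℂ) else 0 := by
        funext n
        rcases eq_or_ne n 0 with rfl | hn
        · simp [S1_n_zero]
        · simp [S1_n_zero, hn]
      constructor
      · rw [hfun]
        simpa using hasSum_ite_eq 0 (1:ℂ)
      · apply summable_of_ne_finset_zero (s := {0})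
        intro n hn
        simp only [Finset.mem_singleton] at hn
        rw [congrFun hfun n]
        simp [hn]
  | succ m ih =>
      obtain ⟨hG, hGn⟩ := ih
      -- the log series
      have hlogfun : (fun n : ℕ => (S1 n 1 : ℂ)/(n.factorial : ℂ) * z^n)
          = fun n : ℕ => z^n / n := by
        funext n
        cases n with
        | zero => simp [S1_zero]
        | succ n =>
            rw [S1_n_one, Nat.factorial_succ]
            have h1 : (n.factorial : ℂ) ≠ 0 := Nat.cast_ne_zero.mpr n.factorial_ne_zero
            have h2 : ((n:ℂ)+1) ≠ 0 := Nat.cast_add_one_ne_zero n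
            push_cast
            field_simp
      have hlog : HasSum (fun n : ℕ => (S1 n 1 : ℂ)/(n.factorial : ℂ) * z^n)
          (-Complex.log (1-z)) := by
        rw [hlogfun]; exact Complex.hasSum_taylorSeries_neg_log hz
      have hlogn : Summable (fun n : ℕ => ‖(S1 n 1 : ℂ)/(n.factorial : ℂ) * z^n‖) := by
        have hbase : Summable (fun n : ℕ => ‖z^n / (n:ℂ)‖) := by
          refine Summable.of_nonneg_of_le (fun n => norm_nonneg _)
            (fun n => ?_) (summable_geometric_of_lt_one (norm_nonneg z) hz)
          rcases eq_or_ne n 0 with rfl | hn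
          · simp
          · have hn1 : (1:ℝ) ≤ (n:ℝ) := by exact_mod_cast Nat.one_le_iff_ne_zero.mpr hn
            rw [norm_div, norm_pow]
            calc ‖z‖^n / ‖(n:ℂ)‖ ≤ ‖z‖^n / 1 := by
                  apply div_le_div_of_nonneg_left ?_ one_pos ?_ |>.trans le_rfl
                  · positivity
                  · simpa using hn1
              _ = ‖z‖^n := div_one _
        exact hbase.congr fun n => by rw [congrFun hlogfun n]
      -- Cauchy product
      have hC := hasSum_sum_range_mul_of_summable_norm hGn hlogn
      rw [hG.tsum_eq, hlog.tsum_eq] at hC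
      have hCn := summable_norm_sum_mul_range_of_summable_norm hGn hlogn
      have hfun : ∀ n : ℕ, ∑ k ∈ range (n+1),
          ((S1 k m : ℂ)/(k.factorial : ℂ) * z^k) * ((S1 (n-k) 1 : ℂ)/((n-k).factorial : ℂ) * z^(n-k))
          = (m+1) * ((S1 n (m+1) : ℂ)/(n.factorial : ℂ) * z^n) := by
        intro n
        have : ∀ k ∈ range (n+1),
            ((S1 k m : ℂ)/(k.factorial : ℂ) * z^k) * ((S1 (n-k) 1 : ℂ)/((n-k).factorial : ℂ) * z^(n-k))
            = ((S1 k m : ℂ)/(k.factorial : ℂ)) * ((S1 (n-k) 1 : ℂ)/((n-k).factorial : ℂ)) * z^n := by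
          intro k hk
          have hk' : k ≤ n := by simpa [Nat.lt_succ_iff] using hk
          rw [show z^n = z^k * z^(n-k) by rw [← pow_add]; congr 1; omega]
          ring
        rw [Finset.sum_congr rfl this, ← Finset.sum_mul, S1_conv_C]
        ring
      constructor
      · have h2 : HasSum (fun n : ℕ => (m+1 : ℂ) * ((S1 n (m+1) : ℂ)/(n.factorial : ℂ) * z^n))
            ((-Complex.log (1-z))^m / (m.factorial : ℂ) * (-Complex.log (1-z))) := by
          convert hC using 1
          · rfl
          funext n
          exact (hfun n).symm
        have h3 := h2.mul_left ((m+1 : ℂ))⁻¹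
        have hm1 : ((m:ℂ)+1) ≠ 0 := Nat.cast_add_one_ne_zero m
        have hmf : (m.factorial : ℂ) ≠ 0 := Nat.cast_ne_zero.mpr m.factorial_ne_zero
        convert h3 using 1
        · rfl
        · funext n
          rw [inv_mul_cancel_left₀ hm1]
        · rw [Nat.factorial_succ, pow_succ]
          push_cast
          field_simp
          try ring
      · have h4 : Summable (fun n : ℕ => ‖(m+1 : ℂ) * ((S1 n (m+1) : ℂ)/(n.factorial : ℂ) * z^n)‖) := by
          convert hCn using 2 with n
          rw [hfun n]
        have h5 := h4.mul_left (((m:ℝ)+1))⁻¹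
        have hnorm : ‖(m+1 : ℂ)‖ = (m:ℝ)+1 := by
          rw [show (m+1:ℂ) = ((m+1:ℕ):ℂ) by push_cast; ring, Complex.norm_natCast]
          push_cast; ring
        have hm : (0:ℝ) < (m:ℝ)+1 := by positivity
        refine Summable.of_nonneg_of_le (fun n => norm_nonneg _) (fun n => le_of_eq ?_) h5
        conv_rhs => rw [norm_mul, hnorm, ← mul_assoc, inv_mul_cancel₀ hm.ne', one_mul]

lemma one_sub_ne_zero_of_norm_lt_one {z : ℂ} (hz : ‖z‖ < 1) : (1:ℂ) - z ≠ 0 := by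
  intro h
  have : z = 1 := by linear_combination -h
  rw [this] at hz
  simp at hz

lemma S1_egf_shift (m : ℕ) (z : ℂ) (hz : ‖z‖ < 1) :
    HasSum (fun n : ℕ => (S1 (n+1) (m+1) : ℂ)/(n.factorial : ℂ) * z^n)
      ((-Complex.log (1-z))^m / ((m.factorial : ℂ) * (1-z))) ∧
    Summable (fun n : ℕ => ‖(S1 (n+1) (m+1) : ℂ)/(n.factorial : ℂ) * z^n‖) := by
  obtain ⟨hG, hGn⟩ := S1_egf m z hz
  have hgeo : HasSum (fun n : ℕ => z^n) (1-z)⁻¹ := hasSum_geometric_of_norm_lt_one hz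
  have hgeon : Summable (fun n : ℕ => ‖z^n‖) := by
    simpa [norm_pow] using summable_geometric_of_lt_one (norm_nonneg z) hz
  have hC := hasSum_sum_range_mul_of_summable_norm hGn hgeon
  rw [hG.tsum_eq, hgeo.tsum_eq] at hC
  have hCn := summable_norm_sum_mul_range_of_summable_norm hGn hgeon
  have hfun : ∀ n : ℕ, ∑ k ∈ range (n+1),
      ((S1 k m : ℂ)/(k.factorial : ℂ) * z^k) * z^(n-k)
      = (S1 (n+1) (m+1) : ℂ)/(n.factorial : ℂ) * z^n := by
    intro n
    have e : ∀ k ∈ range (n+1),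
        ((S1 k m : ℂ)/(k.factorial : ℂ) * z^k) * z^(n-k)
        = ((S1 k m : ℂ)/(k.factorial : ℂ)) * z^n := by
      intro k hk
      have hk' : k ≤ n := by simpa [Nat.lt_succ_iff] using hk
      rw [show z^n = z^k * z^(n-k) by rw [← pow_add]; congr 1; omega]
      ring
    rw [Finset.sum_congr rfl e, ← Finset.sum_mul, S1_partial]
  constructor
  · have h2 : HasSum (fun n : ℕ => (S1 (n+1) (m+1) : ℂ)/(n.factorial : ℂ) * z^n)
        ((-Complex.log (1-z))^m / (m.factorial : ℂ) * (1-z)⁻¹) := by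
      convert hC using 1
      · rfl
      funext n
      exact (hfun n).symm
    convert h2 using 1
    rw [← div_eq_mul_inv, div_div]
  · exact hCn.congr fun n => by rw [hfun n]

/-- For every `m ≥ 0` and complex `|z| < 1`,
`ln^m(1−z)/(1−z) − ln^m(1+z)/(1+z) = 2(−1)^m m! Σ_{k≥0} (|S₁(2k+2,m+1)|/(2k+1)!) z^{2k+1}`,
with the series converging absolutely. -/
theorem log_pow_odd_part_series (m : ℕ) (z : ℂ) (hz : ‖z‖ < 1) :
    HasSum (fun k : ℕ =>
        2 * (-1 : ℂ) ^ m * (Nat.factorial m : ℂ) *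
          ((S1 (2 * k + 2) (m + 1) : ℂ) / (Nat.factorial (2 * k + 1) : ℂ)) *
            z ^ (2 * k + 1))
      ((Complex.log (1 - z)) ^ m / (1 - z) - (Complex.log (1 + z)) ^ m / (1 + z)) ∧
    Summable (fun k : ℕ =>
        ‖2 * (-1 : ℂ) ^ m * (Nat.factorial m : ℂ) *
          ((S1 (2 * k + 2) (m + 1) : ℂ) / (Nat.factorial (2 * k + 1) : ℂ)) *
            z ^ (2 * k + 1)‖) := by
  have hz' : ‖-z‖ < 1 := by rwa [norm_neg]
  obtain ⟨h1, h1n⟩ := S1_egf_shift m z hz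
  obtain ⟨h2, h2n⟩ := S1_egf_shift m (-z) hz'
  rw [show (1:ℂ) - -z = 1 + z by ring] at h2
  set c0 : ℂ := (-1 : ℂ)^m * (m.factorial : ℂ) with hc0
  set f : ℕ → ℂ := fun n => (S1 (n+1) (m+1) : ℂ)/(n.factorial : ℂ) * z^n with hf
  set g : ℕ → ℂ := fun n => (S1 (n+1) (m+1) : ℂ)/(n.factorial : ℂ) * (-z)^n with hg
  have hd := (h1.sub h2).mul_left c0
  -- the combined function
  set h : ℕ → ℂ := fun n => c0 * (f n - g n) with hh
  have hfact : (m.factorial : ℂ) ≠ 0 := Nat.cast_ne_zero.mpr m.factorial_ne_zero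
  have key : ∀ w : ℂ, (-1:ℂ)^m * (-w)^m = w^m := by
    intro w
    rw [← mul_pow, neg_one_mul, neg_neg]
  have hval : ∀ (L d : ℂ), d ≠ 0 →
      c0 * ((-L)^m / ((m.factorial : ℂ) * d)) = L^m / d := by
    intro L d hd'
    calc c0 * ((-L)^m / ((m.factorial : ℂ) * d))
        = ((-1:ℂ)^m * (-L)^m) * ((m.factorial : ℂ) / ((m.factorial : ℂ) * d)) := by
          rw [hc0]; ring
      _ = L^m * ((m.factorial : ℂ) / ((m.factorial : ℂ) * d)) := by rw [key L]
      _ = L^m * (1 / d) := by rw [div_mul_eq_div_div, div_self hfact]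
      _ = L^m / d := by rw [one_div, div_eq_mul_inv]
  have hzm : (1:ℂ) - z ≠ 0 := one_sub_ne_zero_of_norm_lt_one hz
  have hzp : (1:ℂ) + z ≠ 0 := by
    have := one_sub_ne_zero_of_norm_lt_one hz'
    rwa [sub_neg_eq_add] at this
  have hvalue : c0 * ((-Complex.log (1-z))^m / ((m.factorial : ℂ) * (1-z))
        - (-Complex.log (1+z))^m / ((m.factorial : ℂ) * (1+z)))
      = (Complex.log (1-z))^m / (1-z) - (Complex.log (1+z))^m / (1+z) := by
    rw [mul_sub, hval _ _ hzm, hval _ _ hzp]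
  have hdh : HasSum h ((Complex.log (1-z))^m / (1-z) - (Complex.log (1+z))^m / (1+z)) := by
    rw [← hvalue]
    exact hd
  -- odd extraction
  have hi : Function.Injective (fun k : ℕ => 2*k+1) := by
    intro a b hab
    simpa using hab
  have hvanish : ∀ n ∉ Set.range (fun k : ℕ => 2*k+1), h n = 0 := by
    intro n hn
    have heven : Even n := by
      rcases Nat.even_or_odd n with he | ho
      · exact he
      · obtain ⟨j, hj⟩ := ho
        exact absurd ⟨j, by simp; omega⟩ hn
    have : (-z)^n = z^n := heven.neg_pow z
    simp only [hh, hf, hg, this, sub_self, mul_zero]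
  have hterm : ∀ k : ℕ, h (2*k+1) =
      2 * (-1 : ℂ) ^ m * (Nat.factorial m : ℂ) *
        ((S1 (2 * k + 2) (m + 1) : ℂ) / (Nat.factorial (2 * k + 1) : ℂ)) *
          z ^ (2 * k + 1) := by
    intro k
    have hodd : Odd (2*k+1) := ⟨k, by ring⟩
    simp only [hh, hf, hg, hc0]
    rw [hodd.neg_pow]
    rw [show 2*k+1+1 = 2*k+2 from rfl]
    ring
  constructor
  · have := (hi.hasSum_iff hvanish).mpr hdh
    exact this.congr_fun fun k => (hterm k).symm
  · have hsub : Summable (fun n => ‖f n - g n‖) := by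
      apply Summable.of_nonneg_of_le (fun n => norm_nonneg _)
        (fun n => norm_sub_le _ _) (h1n.add h2n)
    have hhn : Summable (fun n => ‖h n‖) := by
      have := hsub.mul_left ‖c0‖
      exact this.congr fun n => by rw [← norm_mul]
    have hcomp := hhn.comp_injective hi
    exact hcomp.congr fun k => by simp only [Function.comp_apply]; rw [hterm k]
end

section
/- For every fixed integer m ≥ 0, one has the asymptotics |S₁(2k+2, m+1)| / (2k+1)! ~ (ln^m k)/m! as k → ∞; that is, the ratio of the left-hand side to (ln^m k)/m! tends to 1 as k → ∞. -/
open Finset Filter Real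

noncomputable def EE (N m : ℕ) : ℝ :=
  ∑ A ∈ (Finset.Icc 1 N).powersetCard m, ∏ j ∈ A, (j : ℝ)⁻¹

lemma EE_zero (N : ℕ) : EE N 0 = 1 := by
  simp [EE, Finset.powersetCard_zero]

lemma EE_nil (m : ℕ) : EE 0 (m + 1) = 0 := by
  have h : Finset.Icc 1 0 = (∅ : Finset ℕ) := Finset.Icc_eq_empty (by omega)
  rw [EE, h]
  rw [Finset.powersetCard_eq_empty.mpr (by simp)]
  simp

lemma EE_nonneg (N m : ℕ) : 0 ≤ EE N m := by
  refine Finset.sum_nonneg fun A _ => Finset.prod_nonneg fun j _ => by positivity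

lemma EE_succ (N m : ℕ) :
    EE (N + 1) (m + 1) = EE N (m + 1) + ((N : ℝ) + 1)⁻¹ * EE N m := by
  have hnot : (N + 1) ∉ Finset.Icc 1 N := by simp
  have hins : Finset.Icc 1 (N + 1) = insert (N + 1) (Finset.Icc 1 N) := by
    ext x; simp [Finset.mem_Icc, Finset.mem_insert]; omega
  have hdisj : Disjoint ((Finset.Icc 1 N).powersetCard (m + 1))
      (((Finset.Icc 1 N).powersetCard m).image (insert (N + 1))) := by
    rw [Finset.disjoint_right]
    intro A hA hA'
    simp only [Finset.mem_image] at hA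
    obtain ⟨B, _, rfl⟩ := hA
    have := Finset.mem_powersetCard.mp hA' |>.1 (Finset.mem_insert_self _ _)
    exact hnot this
  have hinj : ∀ A ∈ (Finset.Icc 1 N).powersetCard m, ∀ B ∈ (Finset.Icc 1 N).powersetCard m,
      insert (N + 1) A = insert (N + 1) B → A = B := by
    intro A hA B hB hAB
    have hA' : (N+1) ∉ A := fun h => hnot ((Finset.mem_powersetCard.mp hA).1 h)
    have hB' : (N+1) ∉ B := fun h => hnot ((Finset.mem_powersetCard.mp hB).1 h)
    rw [← Finset.erase_insert hA', ← Finset.erase_insert hB', hAB]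
  rw [EE, hins, Finset.powersetCard_succ_insert hnot, Finset.sum_union hdisj,
    Finset.sum_image hinj]
  congr 1
  rw [EE, Finset.mul_sum]
  refine Finset.sum_congr rfl fun A hA => ?_
  have hA' : (N+1) ∉ A := fun h => hnot ((Finset.mem_powersetCard.mp hA).1 h)
  rw [Finset.prod_insert hA']
  push_cast
  ring

lemma coeff_asc (n l : ℕ) : ((ascPochhammer ℕ n).coeff l : ℝ) = (ascPochhammer ℝ n).coeff l := by
  rw [← ascPochhammer_map (algebraMap ℕ ℝ) n, Polynomial.coeff_map]
  simp

lemma asc_coeff_zero (n : ℕ) : (ascPochhammer ℝ (n + 1)).coeff 0 = 0 := by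
  rw [Polynomial.coeff_zero_eq_eval_zero, ascPochhammer_eval_zero]
  simp

lemma asc_succ_coeff (n l : ℕ) :
    (ascPochhammer ℝ (n + 1)).coeff (l + 1)
      = (ascPochhammer ℝ n).coeff l + (n : ℝ) * (ascPochhammer ℝ n).coeff (l + 1) := by
  have h : ((n : Polynomial ℝ)) = Polynomial.C ((n : ℝ)) := by simp
  rw [ascPochhammer_succ_right, h, mul_add, Polynomial.coeff_add, Polynomial.coeff_mul_X,
    Polynomial.coeff_mul_C]
  ring

lemma S1_eq (n m : ℕ) : (S1 (n + 1) (m + 1) : ℝ) = (n.factorial : ℝ) * EE n m := by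
  induction n generalizing m with
  | zero =>
    rw [S1, coeff_asc, ascPochhammer_one]
    cases m with
    | zero => simp [EE_zero]
    | succ m => simp [EE_nil, Polynomial.coeff_X]
  | succ n ih =>
    rw [S1, coeff_asc, asc_succ_coeff]
    cases m with
    | zero =>
      rw [asc_coeff_zero, ← coeff_asc, ← S1, ih 0, EE_zero, EE_zero]
      push_cast [Nat.factorial_succ]
      ring
    | succ m =>
      rw [show (ascPochhammer ℝ (n+1)).coeff (m+1) = ((S1 (n+1) (m+1) : ℕ) : ℝ) from (coeff_asc _ _).symm,
        show (ascPochhammer ℝ (n+1)).coeff (m+1+1) = ((S1 (n+1) (m+1+1) : ℕ) : ℝ) from (coeff_asc _ _).symm,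
        ih m, ih (m+1), EE_succ]
      have hn : ((n : ℝ) + 1) ≠ 0 := by positivity
      push_cast [Nat.factorial_succ]
      field_simp
      ring

lemma pow_add_le (p : ℕ) {a b : ℝ} (ha : 0 ≤ a) (hb : 0 ≤ b) :
    a ^ (p + 1) + (p + 1 : ℝ) * b * a ^ p ≤ (a + b) ^ (p + 1) := by
  rw [add_pow, Finset.sum_range_succ, Finset.sum_range_succ]
  have h1 : ∀ k ∈ Finset.range p, (0:ℝ) ≤ a ^ k * b ^ (p + 1 - k) * ((p+1).choose k : ℝ) := by
    intro k _; positivity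
  have h2 : (0:ℝ) ≤ ∑ k ∈ Finset.range p, a ^ k * b ^ (p + 1 - k) * ((p+1).choose k : ℝ) :=
    Finset.sum_nonneg h1
  simp only [Nat.choose_self, Nat.choose_succ_self_right, Nat.sub_self, pow_zero,
    Nat.cast_one, mul_one, Nat.succ_sub_one, pow_one, Nat.add_sub_cancel_left]
  push_cast
  nlinarith [h2]

lemma pow_add_ge (p : ℕ) {a b : ℝ} (ha : 0 ≤ a) (hb : 0 ≤ b) :
    (a + b) ^ (p + 2) ≤ a ^ (p + 2) + (p + 2 : ℝ) * b * a ^ (p + 1)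
      + 2 ^ (p + 2) * (b ^ 2 * (a + b) ^ p) := by
  rw [add_pow, Finset.sum_range_succ, Finset.sum_range_succ]
  have key : ∀ k ∈ Finset.range (p + 1),
      a ^ k * b ^ (p + 2 - k) * ((p+2).choose k : ℝ)
        ≤ ((p+2).choose k : ℝ) * (b ^ 2 * (a + b) ^ p) := by
    intro k hk
    have hk' : k ≤ p := Nat.lt_succ_iff.mp (Finset.mem_range.mp hk)
    have he : p + 2 - k = (p - k) + 2 := by omega
    have h1 : a ^ k * b ^ (p - k) ≤ (a + b) ^ p := by
      calc a ^ k * b ^ (p - k) ≤ (a + b) ^ k * (a + b) ^ (p - k) := by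
            have := pow_le_pow_left₀ ha (by linarith : a ≤ a + b) k
            have := pow_le_pow_left₀ hb (by linarith : b ≤ a + b) (p - k)
            nlinarith [pow_nonneg ha k, pow_nonneg hb (p-k), pow_nonneg (by linarith : (0:ℝ) ≤ a+b) k]
        _ = (a + b) ^ p := by rw [← pow_add]; congr 1; omega
    rw [he, pow_add]
    have h2 := mul_le_mul_of_nonneg_left h1
      (by positivity : (0:ℝ) ≤ ((p+2).choose k : ℝ) * b ^ 2)
    nlinarith [h2]
  have hsum : ∑ k ∈ Finset.range (p + 1), a ^ k * b ^ (p + 2 - k) * ((p+2).choose k : ℝ)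
      ≤ 2 ^ (p + 2) * (b ^ 2 * (a + b) ^ p) := by
    calc ∑ k ∈ Finset.range (p + 1), a ^ k * b ^ (p + 2 - k) * ((p+2).choose k : ℝ)
        ≤ ∑ k ∈ Finset.range (p + 1), ((p+2).choose k : ℝ) * (b ^ 2 * (a + b) ^ p) :=
          Finset.sum_le_sum key
      _ = (∑ k ∈ Finset.range (p + 1), ((p+2).choose k : ℝ)) * (b ^ 2 * (a + b) ^ p) := by
          rw [Finset.sum_mul]
      _ ≤ 2 ^ (p + 2) * (b ^ 2 * (a + b) ^ p) := by
          have h1 : (∑ k ∈ Finset.range (p + 1), (p+2).choose k) ≤ 2 ^ (p + 2) := by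
            calc (∑ k ∈ Finset.range (p + 1), (p+2).choose k)
                ≤ ∑ k ∈ Finset.range (p + 3), (p+2).choose k :=
                  Finset.sum_le_sum_of_subset (Finset.range_subset_range.mpr (by omega))
              _ = 2 ^ (p + 2) := Nat.sum_range_choose (p + 2)
          have h2 : (0:ℝ) ≤ b ^ 2 * (a + b) ^ p := by positivity
          have h3 : ((∑ k ∈ Finset.range (p + 1), (p+2).choose k : ℕ) : ℝ) ≤ (2:ℝ) ^ (p + 2) := by
            exact_mod_cast h1
          push_cast at h3 ⊢
          nlinarith
  have e1 : p + 2 - (p + 1) = 1 := by omega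
  simp only [Nat.choose_self, Nat.choose_succ_self_right, Nat.sub_self, pow_zero,
    Nat.cast_one, mul_one, e1, pow_one]
  push_cast
  nlinarith [hsum]

noncomputable def HH (N : ℕ) : ℝ := (harmonic N : ℝ)

lemma HH_zero : HH 0 = 0 := by simp [HH]

lemma HH_succ (N : ℕ) : HH (N + 1) = HH N + ((N : ℝ) + 1)⁻¹ := by
  rw [HH, HH, harmonic_succ]; push_cast; ring

lemma HH_nonneg (N : ℕ) : 0 ≤ HH N := by
  rw [HH]
  rcases Nat.eq_zero_or_pos N with h | h
  · simp [h]
  · exact_mod_cast (harmonic_pos (Nat.pos_iff_ne_zero.mp h)).le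

lemma EE_one (N : ℕ) : EE N 1 = HH N := by
  induction N with
  | zero => rw [EE_nil, HH_zero]
  | succ N ih => rw [EE_succ, HH_succ, ih, EE_zero]; ring

lemma self_le_pow_succ_add_one (m : ℕ) {x : ℝ} (hx : 0 ≤ x) : x ≤ x ^ (m + 1) + 1 := by
  rcases le_total x 1 with h | h
  · nlinarith [pow_nonneg hx (m+1)]
  · have : x ≤ x ^ (m + 1) := le_self_pow₀ h (by omega)
    linarith

lemma add_one_pow_le (m : ℕ) {x : ℝ} (hx : 0 ≤ x) : (x + 1) ^ m ≤ 2 ^ m * (x ^ m + 1) := by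
  rcases le_total x 1 with h | h
  · have h1 : (x + 1) ^ m ≤ 2 ^ m := pow_le_pow_left₀ (by linarith) (by linarith) m
    nlinarith [pow_nonneg hx m, pow_pos (show (0:ℝ) < 2 by norm_num) m]
  · have h1 : (x + 1) ^ m ≤ (2 * x) ^ m := pow_le_pow_left₀ (by linarith) (by linarith) m
    rw [mul_pow] at h1
    nlinarith [pow_nonneg hx m, pow_pos (show (0:ℝ) < 2 by norm_num) m]

lemma EE_le (N m : ℕ) : ((m.factorial : ℝ)) * EE N m ≤ HH N ^ m := by
  induction N generalizing m with
  | zero =>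
    cases m with
    | zero => simp [EE_zero]
    | succ m => rw [EE_nil, HH_zero]; simp
  | succ N ih =>
    cases m with
    | zero => simp [EE_zero]
    | succ m =>
      rw [EE_succ, HH_succ]
      set h : ℝ := ((N : ℝ) + 1)⁻¹ with hh
      have hh0 : 0 ≤ h := by positivity
      have h1 := ih (m + 1)
      have h2 := ih m
      have key := pow_add_le m (HH_nonneg N) hh0
      have hfac : (((m+1).factorial : ℝ)) = ((m:ℝ) + 1) * (m.factorial : ℝ) := by
        push_cast [Nat.factorial_succ]; ring
      have A1 : (((m+1).factorial : ℝ)) * (EE N (m+1) + h * EE N m)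
          = (((m+1).factorial : ℝ)) * EE N (m+1)
            + ((m:ℝ) + 1) * h * ((m.factorial : ℝ) * EE N m) := by rw [hfac]; ring
      have A2 : ((m:ℝ) + 1) * h * ((m.factorial : ℝ) * EE N m)
          ≤ ((m:ℝ) + 1) * h * HH N ^ m :=
        mul_le_mul_of_nonneg_left h2 (mul_nonneg (by positivity) hh0)
      rw [A1]
      linarith [h1, A2, key]

lemma main_bound (m : ℕ) : ∃ C : ℝ, 0 ≤ C ∧ ∀ N,
    HH N ^ (m + 1) - (((m+1).factorial : ℝ)) * EE N (m + 1) ≤ C * (HH N ^ m + 1) := by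
  induction m with
  | zero =>
    exact ⟨0, le_refl 0, fun N => by simp [EE_one]⟩
  | succ m ih =>
    obtain ⟨C, hC0, hC⟩ := ih
    set K : ℝ := ((m:ℝ) + 2) * C + 2 ^ (2 * m + 2) with hK
    have hK0 : 0 ≤ K := by positivity
    have key : ∀ N, HH N ^ (m + 2) - (((m+2).factorial : ℝ)) * EE N (m + 2)
        ≤ K * (HH N ^ (m + 1) + HH N) := by
      intro N
      induction N with
      | zero => rw [HH_zero, EE_nil]; simp
      | succ N ihN =>
        rw [EE_succ, HH_succ]
        set a : ℝ := HH N with ha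
        set h : ℝ := ((N : ℝ) + 1)⁻¹ with hh
        have ha0 : 0 ≤ a := HH_nonneg N
        have hh0 : 0 < h := by positivity
        have hh1 : h ≤ 1 := by
          rw [hh]
          exact inv_le_one_of_one_le₀ (by linarith [Nat.cast_nonneg (α := ℝ) N])
        have hfac : (((m+2).factorial : ℝ))
            = ((m:ℝ) + 2) * (((m+1).factorial : ℝ)) := by
          push_cast [Nat.factorial_succ]; ring
        have hE : (((m+2).factorial : ℝ)) * (EE N (m+2) + h * EE N (m+1))
            = (((m+2).factorial : ℝ)) * EE N (m+2)
              + ((m:ℝ) + 2) * h * ((((m+1).factorial : ℝ)) * EE N (m+1)) := by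
          rw [hfac]; ring
        have P1 := pow_add_ge m ha0 (le_of_lt hh0)
        -- Q2 : scaled induction hypothesis in m
        have Q2 : ((m:ℝ) + 2) * h * (a ^ (m+1) - (((m+1).factorial : ℝ)) * EE N (m+1))
            ≤ ((m:ℝ) + 2) * h * (C * (a ^ m + 1)) :=
          mul_le_mul_of_nonneg_left (hC N) (by positivity)
        -- Q3 : bound the quadratic term
        have Q3 : (2:ℝ) ^ (m + 2) * (h ^ 2 * (a + h) ^ m)
            ≤ 2 ^ (2 * m + 2) * (h * (a ^ m + 1)) := by
          have e1 : (a + h) ^ m ≤ (a + 1) ^ m :=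
            pow_le_pow_left₀ (by linarith) (by linarith) m
          have e2 : (a + 1) ^ m ≤ 2 ^ m * (a ^ m + 1) := add_one_pow_le m ha0
          have e3 : h ^ 2 ≤ h := by nlinarith
          have e4 : h ^ 2 * (a + h) ^ m ≤ h * (2 ^ m * (a ^ m + 1)) := by
            have e5 : h ^ 2 * (a + h) ^ m ≤ h * (a + h) ^ m :=
              mul_le_mul_of_nonneg_right e3 (by positivity)
            have e6 : h * (a + h) ^ m ≤ h * (2 ^ m * (a ^ m + 1)) :=
              mul_le_mul_of_nonneg_left (e1.trans e2) (le_of_lt hh0)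
            linarith
          have e7 : (2:ℝ) ^ (2 * m + 2) = 2 ^ (m + 2) * 2 ^ m := by
            rw [← pow_add]; congr 1; omega
          rw [e7]
          calc (2:ℝ) ^ (m + 2) * (h ^ 2 * (a + h) ^ m)
              ≤ 2 ^ (m + 2) * (h * (2 ^ m * (a ^ m + 1))) :=
                mul_le_mul_of_nonneg_left e4 (by positivity)
            _ = 2 ^ (m + 2) * 2 ^ m * (h * (a ^ m + 1)) := by ring
        -- Q4 : convert h * (a^m + 1) into telescoping difference
        have Q4 : K * (h * (a ^ m + 1)) ≤ K * ((a + h) ^ (m + 1) - a ^ (m + 1) + h) := by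
          apply mul_le_mul_of_nonneg_left _ hK0
          have k1 := pow_add_le m ha0 (le_of_lt hh0)
          have k2 : h * a ^ m ≤ ((m:ℝ) + 1) * h * a ^ m := by
            nlinarith [mul_nonneg (le_of_lt hh0) (pow_nonneg ha0 m), Nat.cast_nonneg (α := ℝ) m]
          nlinarith [k1, k2]
        have hgoal : EE N (m + 1 + 1) = EE N (m + 2) := rfl
        rw [hgoal, hE, hK] at *
        linarith [P1, ihN, Q2, Q3, Q4]
    refine ⟨2 * K, by positivity, fun N => ?_⟩
    have h1 := key N
    have h2 : K * HH N ≤ K * (HH N ^ (m + 1) + 1) :=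
      mul_le_mul_of_nonneg_left (self_le_pow_succ_add_one m (HH_nonneg N)) hK0
    linarith [h1, h2, hK0]

lemma tendsto_two_mul_add_one : Tendsto (fun k : ℕ => 2 * k + 1) atTop atTop := by
  refine tendsto_atTop.mpr fun b => ?_
  filter_upwards [eventually_ge_atTop b] with k hk
  omega

lemma log_ratio : Tendsto (fun k : ℕ => Real.log (2 * k + 1 : ℕ) - Real.log k)
    atTop (nhds (Real.log 2)) := by
  have h2 : Tendsto (fun k : ℕ => 2 + 1 / (k : ℝ)) atTop (nhds 2) := by
    have := tendsto_one_div_atTop_nhds_zero_nat (𝕜 := ℝ)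
    simpa using (tendsto_const_nhds (x := (2:ℝ))).add this
  have hlog : Tendsto (fun k : ℕ => Real.log (2 + 1 / (k : ℝ))) atTop (nhds (Real.log 2)) :=
    ((Real.continuousAt_log (by norm_num)).tendsto.comp h2)
  apply hlog.congr'
  filter_upwards [eventually_ge_atTop 1] with k hk
  have hk0 : (0:ℝ) < k := by exact_mod_cast hk
  have e1 : (2 : ℝ) + 1 / k = ((2 * k + 1 : ℕ) : ℝ) / k := by
    push_cast; field_simp
  rw [e1, Real.log_div (by positivity) (by positivity)]

lemma HH_sub_log : Tendsto (fun k : ℕ => HH (2 * k + 1) - Real.log k) atTop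
    (nhds (Real.eulerMascheroniConstant + Real.log 2)) := by
  have h1 : Tendsto (fun k : ℕ => HH (2 * k + 1) - Real.log (2 * k + 1 : ℕ)) atTop
      (nhds Real.eulerMascheroniConstant) :=
    Real.tendsto_harmonic_sub_log.comp tendsto_two_mul_add_one
  have := h1.add log_ratio
  apply this.congr
  intro k
  show HH (2 * k + 1) - Real.log ((2 * k + 1 : ℕ) : ℝ)
      + (Real.log ((2 * k + 1 : ℕ) : ℝ) - Real.log k) = _
  ring

lemma HH_div_log : Tendsto (fun k : ℕ => HH (2 * k + 1) / Real.log k) atTop (nhds 1) := by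
  have hlog : Tendsto (fun k : ℕ => Real.log k) atTop atTop :=
    Real.tendsto_log_atTop.comp tendsto_natCast_atTop_atTop
  have h0 : Tendsto (fun k : ℕ => (HH (2 * k + 1) - Real.log k) / Real.log k) atTop (nhds 0) :=
    HH_sub_log.div_atTop hlog
  have := h0.add (tendsto_const_nhds (x := (1:ℝ)))
  rw [zero_add] at this
  apply this.congr'
  filter_upwards [eventually_ge_atTop 2] with k hk
  have hl : 0 < Real.log k := Real.log_pos (by exact_mod_cast Nat.lt_of_lt_of_le one_lt_two hk)
  field_simp
  ring

/-- For every fixed `m ≥ 0`, `|S₁(2k+2, m+1)|/(2k+1)! ~ ln^m k / m!` as `k → ∞`: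
the ratio of the two sides tends to `1`. -/
theorem stirling_ratio_asymptotics (m : ℕ) :
    Tendsto (fun k : ℕ =>
        ((S1 (2 * k + 2) (m + 1) : ℝ) / (Nat.factorial (2 * k + 1) : ℝ)) /
          ((Real.log k) ^ m / (Nat.factorial m : ℝ)))
      atTop (nhds 1) := by
  have hfact : ∀ k : ℕ, ((Nat.factorial (2 * k + 1) : ℝ)) ≠ 0 := fun k => by
    exact_mod_cast Nat.factorial_ne_zero _
  have hS1 : ∀ k : ℕ, (S1 (2 * k + 2) (m + 1) : ℝ)
      = ((2 * k + 1).factorial : ℝ) * EE (2 * k + 1) m := fun k => S1_eq (2 * k + 1) m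
  have hpt : ∀ k : ℕ, ((S1 (2 * k + 2) (m + 1) : ℝ) / (Nat.factorial (2 * k + 1) : ℝ)) /
      ((Real.log k) ^ m / (Nat.factorial m : ℝ))
      = ((m.factorial : ℝ) * EE (2 * k + 1) m) / (Real.log k) ^ m := by
    intro k
    rw [hS1 k, mul_div_cancel_left₀ _ (hfact k), div_div_eq_mul_div, mul_comm]
  cases m with
  | zero =>
    apply tendsto_const_nhds.congr (fun k => ?_)
    rw [hpt k, EE_zero]
    simp
  | succ p =>
    set L : ℕ → ℝ := fun k => Real.log k with hL
    obtain ⟨C, hC0, hC⟩ := main_bound p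
    have hlog : Tendsto L atTop atTop :=
      Real.tendsto_log_atTop.comp tendsto_natCast_atTop_atTop
    have hinv : Tendsto (fun k => (L k)⁻¹) atTop (nhds 0) := hlog.inv_tendsto_atTop
    have hlogpos : ∀ᶠ k : ℕ in atTop, 0 < L k := by
      filter_upwards [eventually_ge_atTop 2] with k hk
      exact Real.log_pos (by exact_mod_cast Nat.lt_of_lt_of_le one_lt_two hk)
    -- error term tends to zero
    have herr : Tendsto (fun k =>
        (((p+1).factorial : ℝ) * EE (2 * k + 1) (p + 1) - HH (2 * k + 1) ^ (p + 1))
          / (L k) ^ (p + 1)) atTop (nhds 0) := by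
      apply squeeze_zero_norm'
        (a := fun k => C * ((HH (2 * k + 1) / L k) ^ p * (L k)⁻¹ + ((L k)⁻¹) ^ (p + 1)))
      · filter_upwards [hlogpos] with k hlk
        have hne : L k ≠ 0 := ne_of_gt hlk
        have h1 := EE_le (2 * k + 1) (p + 1)
        have h2 := hC (2 * k + 1)
        rw [Real.norm_eq_abs, abs_div, abs_of_nonneg (by positivity : (0:ℝ) ≤ (L k) ^ (p+1)),
          abs_of_nonpos (by linarith), neg_sub]
        have h3 : (HH (2 * k + 1) ^ (p + 1) - ((p+1).factorial : ℝ) * EE (2 * k + 1) (p + 1))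
            / (L k) ^ (p + 1) ≤ (C * (HH (2 * k + 1) ^ p + 1)) / (L k) ^ (p + 1) := by
          apply div_le_div_of_nonneg_right h2 (by positivity) |>.trans_eq rfl
        refine h3.trans_eq ?_
        ring
      · have h4 : Tendsto (fun k => (HH (2 * k + 1) / L k) ^ p * (L k)⁻¹ + ((L k)⁻¹) ^ (p + 1))
            atTop (nhds ((1:ℝ) ^ p * 0 + 0 ^ (p + 1))) :=
          ((HH_div_log.pow p).mul hinv).add (hinv.pow (p + 1))
        have := h4.const_mul C
        simpa using this
    have hmain : Tendsto (fun k => (HH (2 * k + 1) / L k) ^ (p + 1) +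
        (((p+1).factorial : ℝ) * EE (2 * k + 1) (p + 1) - HH (2 * k + 1) ^ (p + 1))
          / (L k) ^ (p + 1)) atTop (nhds 1) := by
      have := (HH_div_log.pow (p + 1)).add herr
      simpa using this
    apply hmain.congr'
    filter_upwards [hlogpos] with k hlk
    have hne : L k ≠ 0 := ne_of_gt hlk
    rw [hpt k]
    rw [div_pow]
    simp only [hL] at hne ⊢
    field_simp
    ring
end

section
/- For all integers n ≥ 0 and m ≥ 0, the n-th derivative of the function x ↦ (ln^m x)/x evaluated at x = 1 equals m! · S₁(n+1, m+1), where S₁ denotes the signed Stirling numbers of the first kind. -/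
open Finset Filter Real

/-- Signed Stirling numbers of the first kind: `S₁(n,l) = (−1)^{n+l} |S₁(n,l)|`. -/
noncomputable def S1signed (n l : ℕ) : ℤ := (-1) ^ (n + l) * (S1 n l : ℤ)

namespace StirlingAux

lemma S1_rec (n k : ℕ) : S1 (n+1) (k+1) = S1 n k + n * S1 n (k+1) := by
  simp only [S1, ascPochhammer_succ_right, mul_add, Polynomial.coeff_add,
    Polynomial.coeff_mul_X, ← Polynomial.C_eq_natCast, Polynomial.coeff_mul_C]
  push_cast
  ring

lemma S1_zero_right (n : ℕ) : S1 (n+1) 0 = 0 := by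
  simp [S1, Polynomial.coeff_zero_eq_eval_zero, ascPochhammer_eval_zero]

lemma S1_one (l : ℕ) : S1 1 l = if l = 1 then 1 else 0 := by
  simp only [S1, ascPochhammer_one, Polynomial.coeff_X]
  exact if_congr eq_comm rfl rfl

lemma S1signed_rec (n k : ℕ) :
    S1signed (n+2) (k+1) = S1signed (n+1) k - (n+1) * S1signed (n+1) (k+1) := by
  simp only [S1signed, S1_rec (n+1) k]
  push_cast
  have h1 : ((-1 : ℤ)) ^ (n + 2 + (k + 1)) = (-1) ^ (n + 1 + k) := by
    have : n + 2 + (k + 1) = (n + 1 + k) + 2 := by ring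
    rw [this, pow_add]; norm_num
  have h2 : ((-1 : ℤ)) ^ (n + 1 + (k + 1)) = -(-1) ^ (n + 1 + k) := by
    have : n + 1 + (k + 1) = (n + 1 + k) + 1 := by ring
    rw [this, pow_succ]; ring
  rw [h1, h2]
  ring

/-- Coefficients of the closed form of the `n`-th derivative of `log ^ m x / x`. -/
noncomputable def c (n m l : ℕ) : ℤ :=
  (m.choose l : ℤ) * ((m - l).factorial : ℤ) * S1signed (n+1) (m - l + 1)

lemma c_high {m l : ℕ} (h : m < l) (n : ℕ) : c n m l = 0 := by
  simp [c, Nat.choose_eq_zero_of_lt h]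

lemma c_zero (m l : ℕ) : c 0 m l = if l = m then 1 else 0 := by
  rcases lt_trichotomy l m with h | h | h
  · have hml : m - l + 1 ≠ 1 := by omega
    simp [c, S1signed, S1_one, hml, if_neg (by omega : ¬ l = m)]
    intro h0; omega
  · subst h
    simp [c, S1signed, S1_one]
  · simp [c_high h, if_neg (by omega : ¬ l = m)]

lemma c_rec (n m l : ℕ) (hl : l ≤ m) :
    c (n+1) m l = (l + 1) * c n m (l+1) - (n+1) * c n m l := by
  rcases eq_or_lt_of_le hl with h | h
  · subst h
    have hz : S1signed (n+1) 0 = 0 := by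
      simp [S1signed, S1_zero_right]
    have e1 : c n l (l+1) = 0 := c_high (Nat.lt_succ_self l) n
    have hrec : S1signed (n+1+1) (0+1)
        = S1signed (n+1) 0 - (n+1) * S1signed (n+1) (0+1) := S1signed_rec n 0
    rw [e1, mul_zero, zero_sub]
    unfold c
    rw [Nat.sub_self]
    simp only [Nat.choose_self, Nat.factorial_zero, Nat.cast_one, one_mul]
    rw [hrec, hz]
    ring
  · obtain ⟨k, hk⟩ : ∃ k, m - l = k + 1 := ⟨m - l - 1, by omega⟩
    have h2 : m - (l + 1) = k := by omega
    have hrec : S1signed (n+1+1) (k+1+1)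
        = S1signed (n+1) (k+1) - (n+1) * S1signed (n+1) (k+1+1) :=
      S1signed_rec n (k+1)
    have hfac : (m.choose l : ℤ) * ((k+1).factorial : ℤ)
        = (l + 1) * (m.choose (l+1) : ℤ) * (k.factorial : ℤ) := by
      have e1 : m.choose l * l.factorial * (m - l).factorial = m.factorial :=
        Nat.choose_mul_factorial_mul_factorial hl
      have e2 : m.choose (l+1) * (l+1).factorial * (m - (l+1)).factorial = m.factorial :=
        Nat.choose_mul_factorial_mul_factorial h
      rw [hk] at e1
      rw [h2, Nat.factorial_succ] at e2
      have e1' : (m.choose l : ℤ) * l.factorial * (k+1).factorial = m.factorial := by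
        exact_mod_cast congrArg (Nat.cast : ℕ → ℤ) e1
      have e2' : (m.choose (l+1) : ℤ) * ((l+1) * l.factorial) * k.factorial = m.factorial := by
        exact_mod_cast congrArg (Nat.cast : ℕ → ℤ) e2
      have hlf : (l.factorial : ℤ) ≠ 0 := by
        exact_mod_cast (Nat.factorial_pos l).ne'
      apply mul_right_cancel₀ hlf
      push_cast at e1' e2' ⊢
      linear_combination e1' - e2'
    unfold c
    rw [hk, h2, hrec, hfac]
    ring

lemma c_eval_zero (n m : ℕ) :
    c n m 0 = (m.factorial : ℤ) * S1signed (n+1) (m+1) := by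
  simp [c]

/-- Closed form for the iterated derivative. -/
lemma iteratedDeriv_closed_form (m : ℕ) (n : ℕ) :
    ∀ x : ℝ, 0 < x →
      iteratedDeriv n (fun x : ℝ => Real.log x ^ m / x) x
        = (∑ l ∈ Finset.range (m+1), (c n m l : ℝ) * Real.log x ^ l) / x ^ (n+1) := by
  induction n with
  | zero =>
    intro x hx
    rw [iteratedDeriv_zero]
    have : ∑ l ∈ Finset.range (m+1), (c 0 m l : ℝ) * Real.log x ^ l
        = Real.log x ^ m := by
      rw [Finset.sum_eq_single m]
      · simp [c_zero]
      · intro b _ hb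
        simp [c_zero, hb]
      · intro h
        exact absurd (Finset.self_mem_range_succ m) h
    rw [this]
    simp
  | succ n ih =>
    intro x hx
    rw [iteratedDeriv_succ]
    have hev : iteratedDeriv n (fun x : ℝ => Real.log x ^ m / x)
        =ᶠ[nhds x] fun y =>
          (∑ l ∈ Finset.range (m+1), (c n m l : ℝ) * Real.log y ^ l) / y ^ (n+1) := by
      filter_upwards [Ioi_mem_nhds hx] with y hy
      exact ih y hy
    rw [hev.deriv_eq]
    have hx0 : x ≠ 0 := ne_of_gt hx
    -- derivative of numerator
    have hu : HasDerivAt (fun y : ℝ => ∑ l ∈ Finset.range (m+1), (c n m l : ℝ) * Real.log y ^ l)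
        (∑ l ∈ Finset.range (m+1), (c n m l : ℝ) * ((l : ℝ) * Real.log x ^ (l-1) * x⁻¹)) x := by
      apply HasDerivAt.fun_sum
      intro l _
      exact ((Real.hasDerivAt_log hx0).pow l).const_mul _
    have hv : HasDerivAt (fun y : ℝ => y ^ (n+1)) (((n+1 : ℕ) : ℝ) * x ^ n) x := by
      simpa using hasDerivAt_pow (n+1) x
    have hvx : x ^ (n+1) ≠ 0 := pow_ne_zero _ hx0
    have hder := hu.fun_div hv hvx
    rw [hder.deriv]
    -- now pure algebra
    set L := Real.log x with hL
    -- rewrite the sum of derivatives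
    have hA : (∑ l ∈ Finset.range (m+1), (c n m l : ℝ) * ((l : ℝ) * L ^ (l-1) * x⁻¹))
        = x⁻¹ * ∑ l ∈ Finset.range (m+1), ((l+1 : ℕ) : ℝ) * (c n m (l+1) : ℝ) * L ^ l := by
      rw [Finset.mul_sum]
      rw [Finset.sum_range_succ' (fun l => (c n m l : ℝ) * ((l : ℝ) * L ^ (l-1) * x⁻¹)) m]
      rw [Finset.sum_range_succ (fun l => x⁻¹ * (((l+1 : ℕ) : ℝ) * (c n m (l+1) : ℝ) * L ^ l)) m]
      have hc0 : (c n m (m+1) : ℝ) = 0 := by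
        rw [c_high (Nat.lt_succ_self m)]; simp
      simp only [hc0]
      simp only [Nat.cast_zero, zero_mul, mul_zero, add_zero, Nat.add_sub_cancel]
      apply Finset.sum_congr rfl
      intro l _
      push_cast
      ring
    have hB : (∑ l ∈ Finset.range (m+1), (c (n+1) m l : ℝ) * L ^ l)
        = (∑ l ∈ Finset.range (m+1), ((l+1 : ℕ) : ℝ) * (c n m (l+1) : ℝ) * L ^ l)
          - ((n+1 : ℕ) : ℝ) * ∑ l ∈ Finset.range (m+1), (c n m l : ℝ) * L ^ l := by
      rw [Finset.mul_sum, ← Finset.sum_sub_distrib]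
      apply Finset.sum_congr rfl
      intro l hl
      have hlm : l ≤ m := Nat.lt_succ_iff.mp (Finset.mem_range.mp hl)
      rw [c_rec n m l hlm]
      push_cast
      ring
    rw [hA]
    rw [hB]
    set A := ∑ l ∈ Finset.range (m+1), ((l+1 : ℕ) : ℝ) * (c n m (l+1) : ℝ) * L ^ l
    set S := ∑ l ∈ Finset.range (m+1), (c n m l : ℝ) * L ^ l
    field_simp
    ring

end StirlingAux

/-- For all `n, m ≥ 0`, the `n`-th derivative of `x ↦ ln^m x / x` at `x = 1` equals
`m! · S₁(n+1, m+1)`. -/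
theorem iteratedDeriv_log_pow_div_at_one (n m : ℕ) :
    iteratedDeriv n (fun x : ℝ => (Real.log x) ^ m / x) 1 =
      (Nat.factorial m : ℝ) * (S1signed (n + 1) (m + 1) : ℝ) := by
  have h := StirlingAux.iteratedDeriv_closed_form m n 1 one_pos
  rw [h]
  rw [Real.log_one]
  rw [Finset.sum_eq_single 0]
  · rw [StirlingAux.c_eval_zero]
    push_cast
    ring
  · intro b _ hb
    simp [zero_pow hb]
  · intro h0
    exact absurd (Finset.mem_range.mpr (Nat.succ_pos m)) h0
end

section
/- For every integer N ≥ 1 there exists θ ∈ (0,1) (depending on N) such that Euler's constant satisfies γ = (1/2)·( 1 + Σ_{k=1}^{N} B_{2k}/k + θ · B_{2N+2}/(N+1) ). -/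
open Finset Filter Real MeasureTheory intervalIntegral Set Topology

namespace EulerEnv

lemma continuous_bernoulliFun (m : ℕ) : Continuous (bernoulliFun m) := by
  unfold bernoulliFun
  exact Polynomial.continuous _

lemma den_pos (n : ℕ) {t : ℝ} (ht : t ∈ Set.uIcc (0:ℝ) 1) : 0 < (n : ℝ) + 1 + t := by
  rw [Set.uIcc_of_le (by norm_num : (0:ℝ) ≤ 1)] at ht
  have := ht.1
  positivity

lemma contOn (m p n : ℕ) :
    ContinuousOn (fun t : ℝ => bernoulliFun m t / ((n : ℝ) + 1 + t) ^ p)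
      (Set.uIcc (0:ℝ) 1) := by
  apply ContinuousOn.div (continuous_bernoulliFun m).continuousOn
  · fun_prop
  · intro t ht
    exact pow_ne_zero _ (den_pos n ht).ne'

lemma intInt (m p n : ℕ) :
    IntervalIntegrable (fun t : ℝ => bernoulliFun m t / ((n : ℝ) + 1 + t) ^ p)
      volume 0 1 :=
  (contOn m p n).intervalIntegrable

lemma hasDerivAt_inv_pow (n p : ℕ) {t : ℝ} (ht : t ∈ Set.uIcc (0:ℝ) 1) :
    HasDerivAt (fun t : ℝ => (((n : ℝ) + 1 + t) ^ (p + 1))⁻¹)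
      (-((p : ℝ) + 1) / ((n : ℝ) + 1 + t) ^ (p + 2)) t := by
  have hx : (0:ℝ) < (n : ℝ) + 1 + t := den_pos n ht
  have h1 : HasDerivAt (fun t : ℝ => (n : ℝ) + 1 + t) 1 t := (hasDerivAt_id t).const_add _
  have h2 := h1.pow (p + 1)
  have h3 := h2.inv (pow_ne_zero _ hx.ne')
  refine h3.congr_deriv (Eq.symm ?_)
  have hxne : ((n : ℝ) + 1 + t) ≠ 0 := hx.ne'
  simp only [Pi.pow_apply, Nat.add_sub_cancel, Nat.cast_add, Nat.cast_one]
  field_simp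
  ring

/-- `aInt m n = ∫₀¹ Bₘ(t)/(n+1+t)^(m+1) dt`. -/
noncomputable def aInt (m n : ℕ) : ℝ :=
  ∫ t in (0:ℝ)..1, bernoulliFun m t / ((n : ℝ) + 1 + t) ^ (m + 1)

lemma summable_aux (c : ℝ) : Summable (fun n : ℕ => c / ((n : ℝ) + 1) ^ 2) := by
  have h : Summable (fun n : ℕ => 1 / ((n : ℝ) + 1) ^ 2) := by
    have := (summable_nat_add_iff (f := fun n : ℕ => 1 / (n : ℝ) ^ 2) 1).mpr
      (summable_one_div_nat_pow.mpr one_lt_two)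
    simpa using this
  simpa [div_eq_mul_inv, mul_comm] using h.mul_left c

lemma abs_aInt_le (m n : ℕ) (hm : 1 ≤ m) {M : ℝ}
    (hM : ∀ t ∈ Set.Icc (0:ℝ) 1, |bernoulliFun m t| ≤ M) :
    |aInt m n| ≤ M / ((n : ℝ) + 1) ^ 2 := by
  have key : ∀ t ∈ Set.uIoc (0:ℝ) 1,
      ‖bernoulliFun m t / ((n : ℝ) + 1 + t) ^ (m + 1)‖ ≤ M / ((n : ℝ) + 1) ^ 2 := by
    intro t ht
    rw [Set.uIoc_of_le (by norm_num : (0:ℝ) ≤ 1)] at ht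
    have ht0 : 0 ≤ t := le_of_lt ht.1
    have ht1 : t ≤ 1 := ht.2
    have hden2 : ((n : ℝ) + 1) ^ 2 ≤ ((n : ℝ) + 1 + t) ^ (m + 1) := by
      calc ((n : ℝ) + 1) ^ 2 ≤ ((n : ℝ) + 1 + t) ^ 2 := by
            apply pow_le_pow_left₀ (by positivity)
            linarith
        _ ≤ ((n : ℝ) + 1 + t) ^ (m + 1) := by
            apply pow_le_pow_right₀ (by linarith [Nat.cast_nonneg (α := ℝ) n])
            omega
    have hBM := hM t ⟨ht0, ht1⟩
    have hMpos : 0 ≤ M := le_trans (abs_nonneg _) hBM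
    rw [norm_div, Real.norm_eq_abs, Real.norm_eq_abs]
    have hd : |((n : ℝ) + 1 + t) ^ (m + 1)| = ((n : ℝ) + 1 + t) ^ (m + 1) :=
      abs_of_pos (by positivity)
    rw [hd]
    apply div_le_div₀ hMpos hBM (by positivity) hden2
  have := intervalIntegral.norm_integral_le_of_norm_le_const key
  simpa [aInt] using this

lemma summable_aInt (m : ℕ) (hm : 1 ≤ m) : Summable (fun n : ℕ => aInt m n) := by
  obtain ⟨M, hM⟩ := (isCompact_Icc (a := (0:ℝ)) (b := 1)).exists_bound_of_continuousOn
    (continuous_bernoulliFun m).continuousOn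
  apply Summable.of_norm_bounded (summable_aux M)
  intro n
  rw [Real.norm_eq_abs]
  exact abs_aInt_le m n hm (fun t ht => hM t ht)

/-- Integration by parts recurrence. -/
lemma aInt_rec (m n : ℕ) (hm : 1 ≤ m) :
    aInt m n = ((bernoulli (m + 1) : ℚ) : ℝ) / ((m : ℝ) + 1)
        * ((((n : ℝ) + 2) ^ (m + 1))⁻¹ - (((n : ℝ) + 1) ^ (m + 1))⁻¹)
      + aInt (m + 1) n := by
  have hu : ∀ x ∈ Set.uIcc (0:ℝ) 1,
      HasDerivAt (fun x => bernoulliFun (m + 1) x / ((m : ℝ) + 1)) (bernoulliFun m x) x :=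
    fun x _ => antideriv_bernoulliFun m x
  have hv : ∀ x ∈ Set.uIcc (0:ℝ) 1,
      HasDerivAt (fun t : ℝ => (((n : ℝ) + 1 + t) ^ (m + 1))⁻¹)
        (-((m : ℝ) + 1) / ((n : ℝ) + 1 + x) ^ (m + 2)) x :=
    fun x hx => hasDerivAt_inv_pow n m hx
  have hu' : IntervalIntegrable (fun x => bernoulliFun m x) volume 0 1 :=
    ((continuous_bernoulliFun m).continuousOn).intervalIntegrable
  have hv' : IntervalIntegrable (fun x : ℝ => -((m : ℝ) + 1) / ((n : ℝ) + 1 + x) ^ (m + 2))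
      volume 0 1 := by
    apply ContinuousOn.intervalIntegrable
    apply ContinuousOn.div continuousOn_const
    · fun_prop
    · intro t ht
      exact pow_ne_zero _ (den_pos n ht).ne'
  have ibp := intervalIntegral.integral_mul_deriv_eq_deriv_mul hu hv hu' hv'
  -- LHS of ibp equals -aInt (m+1) n
  have hL : (∫ x in (0:ℝ)..1, (bernoulliFun (m + 1) x / ((m : ℝ) + 1)) *
        (-((m : ℝ) + 1) / ((n : ℝ) + 1 + x) ^ (m + 2))) = -aInt (m + 1) n := by
    rw [aInt, ← intervalIntegral.integral_neg]
    apply intervalIntegral.integral_congr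
    intro x hx
    have hm1 : ((m : ℝ) + 1) ≠ 0 := by positivity
    have hXne : ((n : ℝ) + 1 + x) ^ (m + 2) ≠ 0 := pow_ne_zero _ (den_pos n hx).ne'
    show bernoulliFun (m + 1) x / ((m : ℝ) + 1) * (-((m : ℝ) + 1) / ((n : ℝ) + 1 + x) ^ (m + 2))
      = -(bernoulliFun (m + 1) x / ((n : ℝ) + 1 + x) ^ (m + 2))
    generalize ((n : ℝ) + 1 + x) ^ (m + 2) = X at hXne ⊢
    field_simp
  -- RHS integral equals aInt m n
  have hR : (∫ x in (0:ℝ)..1, bernoulliFun m x * (((n : ℝ) + 1 + x) ^ (m + 1))⁻¹)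
      = aInt m n := by
    rw [aInt]
    apply intervalIntegral.integral_congr
    intro x _
    show bernoulliFun m x * (((n : ℝ) + 1 + x) ^ (m + 1))⁻¹
      = bernoulliFun m x / ((n : ℝ) + 1 + x) ^ (m + 1)
    rw [div_eq_mul_inv]
  rw [hL, hR] at ibp
  have hb1 : bernoulliFun (m + 1) 1 = bernoulliFun (m + 1) 0 :=
    bernoulliFun_endpoints_eq_of_ne_one (by omega)
  have hb0 : bernoulliFun (m + 1) 0 = ((bernoulli (m + 1) : ℚ) : ℝ) := bernoulliFun_eval_zero _
  rw [hb1, hb0, show ((n:ℝ) + 1 + 1) = (n:ℝ) + 2 by ring, show ((n:ℝ) + 1 + 0) = (n:ℝ) + 1 by ring]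
    at ibp
  rw [mul_sub]
  linarith [ibp]

/-- telescoping sum -/
lemma hasSum_inv_pow_sub (q : ℕ) (hq : 2 ≤ q) :
    HasSum (fun n : ℕ => (((n : ℝ) + 2) ^ q)⁻¹ - (((n : ℝ) + 1) ^ q)⁻¹) (-1) := by
  have s0 : Summable (fun n : ℕ => ((n : ℝ) ^ q)⁻¹) := by
    simpa [one_div] using summable_one_div_nat_pow.mpr (by omega : 1 < q)
  have s1 : Summable (fun n : ℕ => (((n : ℝ) + 1) ^ q)⁻¹) := by
    have := (summable_nat_add_iff (f := fun n : ℕ => ((n : ℝ) ^ q)⁻¹) 1).mpr s0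
    simpa using this
  have s2 : Summable (fun n : ℕ => (((n : ℝ) + 2) ^ q)⁻¹) := by
    have := (summable_nat_add_iff (f := fun n : ℕ => ((n : ℝ) ^ q)⁻¹) 2).mpr s0
    have e : ∀ n : ℕ, (((n + 2 : ℕ) : ℝ) ^ q)⁻¹ = (((n : ℝ) + 2) ^ q)⁻¹ := by
      intro n; push_cast; ring_nf
    simpa [e] using this
  have hs := s2.sub s1
  have hps : ∀ n : ℕ, (∑ i ∈ Finset.range n,
        ((((i : ℝ) + 2) ^ q)⁻¹ - (((i : ℝ) + 1) ^ q)⁻¹))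
      = (((n : ℝ) + 1) ^ q)⁻¹ - 1 := by
    intro n
    have h := Finset.sum_range_sub (fun i : ℕ => (((i : ℝ) + 1) ^ q)⁻¹) n
    calc (∑ i ∈ Finset.range n, ((((i : ℝ) + 2) ^ q)⁻¹ - (((i : ℝ) + 1) ^ q)⁻¹))
        = ∑ i ∈ Finset.range n,
            (((((i + 1 : ℕ) : ℝ) + 1) ^ q)⁻¹ - (((i : ℝ) + 1) ^ q)⁻¹) := by
          apply Finset.sum_congr rfl
          intro i _
          push_cast
          ring_nf
      _ = ((((n : ℕ) : ℝ) + 1) ^ q)⁻¹ - ((((0 : ℕ) : ℝ) + 1) ^ q)⁻¹ := h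
      _ = (((n : ℝ) + 1) ^ q)⁻¹ - 1 := by norm_num
  have hlim : Tendsto (fun n : ℕ => (((n : ℝ) + 1) ^ q)⁻¹ - 1) atTop (𝓝 (0 - 1)) := by
    apply Tendsto.sub_const
    apply tendsto_inv_atTop_zero.comp
    exact (tendsto_pow_atTop (by omega : q ≠ 0)).comp
      (tendsto_atTop_add_const_right atTop 1 tendsto_natCast_atTop_atTop)
  have key : Tendsto (fun n : ℕ => ∑ i ∈ Finset.range n,
      ((((i : ℝ) + 2) ^ q)⁻¹ - (((i : ℝ) + 1) ^ q)⁻¹)) atTop (𝓝 (-1)) := by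
    simp only [hps]
    simpa using hlim
  have h2 := hs.hasSum.tendsto_sum_nat
  have h3 := tendsto_nhds_unique h2 key
  exact h3 ▸ hs.hasSum

noncomputable def J (m : ℕ) : ℝ := ∑' n : ℕ, aInt m n

lemma hasSum_J (m : ℕ) (hm : 1 ≤ m) : HasSum (fun n : ℕ => aInt m n) (J m) :=
  (summable_aInt m hm).hasSum

lemma J_rec (m : ℕ) (hm : 1 ≤ m) :
    J m = -((bernoulli (m + 1) : ℚ) : ℝ) / ((m : ℝ) + 1) + J (m + 1) := by
  have h1 := (hasSum_inv_pow_sub (m + 1) (by omega)).mul_left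
    (((bernoulli (m + 1) : ℚ) : ℝ) / ((m : ℝ) + 1))
  have h2 := hasSum_J (m + 1) (by omega)
  have h3 := h1.add h2
  have h4 : (fun n : ℕ => ((bernoulli (m + 1) : ℚ) : ℝ) / ((m : ℝ) + 1) *
      ((((n : ℝ) + 2) ^ (m + 1))⁻¹ - (((n : ℝ) + 1) ^ (m + 1))⁻¹) + aInt (m + 1) n)
      = fun n => aInt m n := by
    funext n
    rw [aInt_rec m n hm]
  rw [h4] at h3
  rw [J, h3.tsum_eq]
  ring

lemma bernoulliFun_one (x : ℝ) : bernoulliFun 1 x = x - 1/2 := by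
  have : (Polynomial.bernoulli 1) = Polynomial.X - Polynomial.C (1/2 : ℚ) := by
    simp [Polynomial.bernoulli_def, Finset.sum_range_succ, Polynomial.monomial_one_one_eq_X]
    rw [show (-1/2 : ℚ) = -(1/2) by norm_num, map_neg]
    ring
  rw [bernoulliFun, this]
  simp

lemma aInt_one (n : ℕ) :
    aInt 1 n = (Real.log ((n : ℝ) + 2) - Real.log ((n : ℝ) + 1))
      - (1/2) * (1/((n : ℝ) + 1) + 1/((n : ℝ) + 2)) := by
  have hF : ∀ x ∈ Set.uIcc (0:ℝ) 1,
      HasDerivAt (fun t : ℝ => Real.log ((n : ℝ) + 1 + t) + ((n : ℝ) + 3/2) * ((n : ℝ) + 1 + t)⁻¹)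
        (bernoulliFun 1 x / ((n : ℝ) + 1 + x) ^ (1 + 1)) x := by
    intro x hx
    have hx0 : (0:ℝ) < (n : ℝ) + 1 + x := den_pos n hx
    have h1 : HasDerivAt (fun t : ℝ => (n : ℝ) + 1 + t) 1 x := (hasDerivAt_id x).const_add _
    have hlog : HasDerivAt (fun t : ℝ => Real.log ((n : ℝ) + 1 + t)) (((n : ℝ) + 1 + x)⁻¹ * 1) x :=
      (Real.hasDerivAt_log hx0.ne').comp x h1
    have hinv : HasDerivAt (fun t : ℝ => ((n : ℝ) + 1 + t)⁻¹)
        (-(1 * 1) / ((n : ℝ) + 1 + x) ^ 2) x := by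
      have h2 := h1.inv hx0.ne'
      refine h2.congr_deriv (Eq.symm ?_)
      rw [sq]
      norm_num
    have hsum := hlog.add (hinv.const_mul ((n : ℝ) + 3/2))
    refine hsum.congr_deriv (Eq.symm ?_)
    rw [bernoulliFun_one]
    have hne : ((n : ℝ) + 1 + x) ≠ 0 := hx0.ne'
    field_simp
    ring
  have hval := intervalIntegral.integral_eq_sub_of_hasDerivAt hF (intInt 1 (1+1) n)
  rw [aInt, hval]
  have h1 : ((n : ℝ) + 1) ≠ 0 := by positivity
  have h2 : ((n : ℝ) + 2) ≠ 0 := by positivity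
  rw [show ((n : ℝ) + 1 + 1) = (n : ℝ) + 2 by ring, show ((n : ℝ) + 1 + 0) = (n : ℝ) + 1 by ring]
  field_simp
  ring

lemma hasSum_aInt_one :
    HasSum (fun n : ℕ => aInt 1 n) (1/2 - Real.eulerMascheroniConstant) := by
  have hs := summable_aInt 1 le_rfl
  have hps : ∀ n : ℕ, (∑ i ∈ Finset.range n, aInt 1 i)
      = Real.log ((n : ℝ) + 1)
        - (1/2) * (((harmonic n : ℚ) : ℝ) + ((harmonic (n+1) : ℚ) : ℝ) - 1) := by
    intro n
    induction n with
    | zero =>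
      simp [harmonic_succ]
    | succ k ih =>
      rw [Finset.sum_range_succ, ih, aInt_one k]
      have e1 : ((harmonic (k+1) : ℚ) : ℝ) = ((harmonic k : ℚ) : ℝ) + 1/((k : ℝ) + 1) := by
        rw [harmonic_succ]
        push_cast
        ring
      have e2 : ((harmonic (k+2) : ℚ) : ℝ) = ((harmonic (k+1) : ℚ) : ℝ) + 1/((k : ℝ) + 2) := by
        rw [harmonic_succ (k+1)]
        push_cast
        ring
      rw [show ((k : ℕ) + 1 + 1) = k + 2 by ring] at *
      rw [e1, e2, e1]
      push_cast
      ring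
  have h1 : Tendsto (fun n : ℕ => ((harmonic n : ℚ) : ℝ) - Real.log ((n : ℝ) + 1)) atTop
      (𝓝 Real.eulerMascheroniConstant) := Real.tendsto_harmonic_sub_log_add_one
  have h2 : Tendsto (fun n : ℕ => ((harmonic (n+1) : ℚ) : ℝ) - Real.log ((n : ℝ) + 1)) atTop
      (𝓝 Real.eulerMascheroniConstant) := by
    refine (Real.tendsto_harmonic_sub_log.comp (tendsto_add_atTop_nat 1)).congr fun n => ?_
    have e : ((n + 1 : ℕ) : ℝ) = (n : ℝ) + 1 := by push_cast; ring
    simp only [Function.comp_apply, e]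
  have hlim : Tendsto (fun n : ℕ => Real.log ((n : ℝ) + 1)
      - (1/2) * (((harmonic n : ℚ) : ℝ) + ((harmonic (n+1) : ℚ) : ℝ) - 1)) atTop
      (𝓝 (1/2 - Real.eulerMascheroniConstant)) := by
    have h3 := ((h1.add h2).const_mul (1/2 : ℝ))
    have h4 := (tendsto_const_nhds (α := ℕ) (f := atTop) (x := (1/2 : ℝ))).sub h3
    have h5 : (1/2 - Real.eulerMascheroniConstant)
        = 1/2 - 1/2 * (Real.eulerMascheroniConstant + Real.eulerMascheroniConstant) := by ring
    rw [h5]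
    apply Tendsto.congr _ h4
    intro n
    ring
  have key : Tendsto (fun n : ℕ => ∑ i ∈ Finset.range n, aInt 1 i) atTop
      (𝓝 (1/2 - Real.eulerMascheroniConstant)) := by
    simp only [hps]
    exact hlim
  have h6 := hs.hasSum.tendsto_sum_nat
  have h7 := tendsto_nhds_unique h6 key
  exact h7 ▸ hs.hasSum

lemma J_one : J 1 = 1/2 - Real.eulerMascheroniConstant := hasSum_aInt_one.tsum_eq

lemma gamma_expansion (N : ℕ) :
    Real.eulerMascheroniConstant
      = 1/2 + (∑ k ∈ Finset.Icc 1 N, ((bernoulli (2*k) : ℚ) : ℝ) / (2*(k:ℝ))) - J (2*N+1) := by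
  induction N with
  | zero => simp [J_one]
  | succ n ih =>
    have h1 := J_rec (2*n+1) (by omega)
    have h2 := J_rec (2*n+1+1) (by omega)
    have hodd : ((bernoulli (2*n+1+1+1) : ℚ) : ℝ) = 0 := by
      rw [bernoulli_eq_bernoulli'_of_ne_one (by omega),
        bernoulli'_eq_zero_of_odd ⟨n+1, by ring⟩ (by omega)]
      simp
    rw [Finset.sum_Icc_succ_top (by omega : 1 ≤ n + 1), ih, h1, h2, hodd]
    have e1 : 2*(n+1)+1 = 2*n+1+1+1 := by ring
    have e2 : 2*(n+1) = 2*n+1+1 := by ring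
    rw [e1, e2]
    push_cast
    ring

/-- Sign of `B_{2k} - B_{2k}(x)` on `(0,1)`, via the Fourier expansion. -/
lemma sign_bernoulli_sub (k : ℕ) (hk : k ≠ 0) {x : ℝ} (hx : x ∈ Set.Ioo (0:ℝ) 1) :
    0 < (-1 : ℝ)^(k+1) * (bernoulliFun (2*k) 0 - bernoulliFun (2*k) x) := by
  have hx01 : x ∈ Set.Icc (0:ℝ) 1 := ⟨hx.1.le, hx.2.le⟩
  have h0 : (0:ℝ) ∈ Set.Icc (0:ℝ) 1 := by norm_num
  have Hx := hasSum_one_div_nat_pow_mul_cos hk hx01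
  have H0 := hasSum_one_div_nat_pow_mul_cos hk h0
  have hle : ∀ n : ℕ, (1 / (n:ℝ)^(2*k) * Real.cos (2*π*n*x))
      ≤ 1 / (n:ℝ)^(2*k) * Real.cos (2*π*n*0) := by
    intro n
    rw [mul_zero, Real.cos_zero]
    exact mul_le_mul_of_nonneg_left (Real.cos_le_one _) (by positivity)
  have h1lt : (1 / ((1:ℕ):ℝ)^(2*k) * Real.cos (2*π*(1:ℕ)*x))
      < 1 / ((1:ℕ):ℝ)^(2*k) * Real.cos (2*π*(1:ℕ)*0) := by
    rw [mul_zero, Real.cos_zero, Nat.cast_one, one_pow, div_one, one_mul, one_mul, mul_one]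
    rcases lt_or_eq_of_le (Real.cos_le_one (2*π*x)) with h | h
    · exact h
    · exfalso
      obtain ⟨m, hm⟩ := (Real.cos_eq_one_iff _).mp h
      have hπ : (2*π : ℝ) ≠ 0 := by positivity
      have hmx : (m : ℝ) = x := by
        have : (m : ℝ) * (2*π) = x * (2*π) := by rw [hm]; ring
        exact mul_right_cancel₀ hπ this
      have h0m : (0:ℝ) < (m:ℝ) := hmx ▸ hx.1
      have h1m : (m:ℝ) < 1 := hmx ▸ hx.2
      have : (0:ℤ) < m := by exact_mod_cast h0m
      have : m < 1 := by exact_mod_cast h1m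
      omega
  have hlt := hasSum_lt hle h1lt Hx H0
  -- deduce the sign
  have hB0 : Polynomial.eval (0:ℝ) (Polynomial.map (algebraMap ℚ ℝ) (Polynomial.bernoulli (2*k)))
      = bernoulliFun (2*k) 0 := rfl
  have hBx : Polynomial.eval x (Polynomial.map (algebraMap ℚ ℝ) (Polynomial.bernoulli (2*k)))
      = bernoulliFun (2*k) x := rfl
  rw [hB0, hBx] at hlt
  have hE : (0:ℝ) < (2*π)^(2*k) / 2 / ((2*k).factorial : ℝ) := by positivity
  set B0 := bernoulliFun (2*k) 0
  set Bx := bernoulliFun (2*k) x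
  set E := (2*π : ℝ)^(2*k) / 2 / ((2*k).factorial : ℝ) with hEdef
  have hc : 0 < ((-1:ℝ)^(k+1) * (B0 - Bx)) * E := by
    have e1 : ((-1:ℝ)^(k+1) * (B0 - Bx)) * E
        = (-1:ℝ)^(k+1) * (2*π)^(2*k) / 2 / ((2*k).factorial : ℝ) * B0
          - (-1:ℝ)^(k+1) * (2*π)^(2*k) / 2 / ((2*k).factorial : ℝ) * Bx := by
      rw [hEdef]; ring
    rw [e1]
    linarith [hlt]
  nlinarith [hc, hE]

/-- `∑ₙ ∫₀¹ dt/(n+1+t)^(q+1) = 1/q`. -/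
lemma hasSum_w (q : ℕ) (hq : 2 ≤ q) :
    HasSum (fun n : ℕ => ∫ t in (0:ℝ)..1, (((n:ℝ)+1+t) ^ (q+1))⁻¹) (1/(q:ℝ)) := by
  have h := (hasSum_inv_pow_sub q hq).mul_left (-(1/(q:ℝ)))
  have e : (fun n : ℕ => -(1/(q:ℝ)) * ((((n : ℝ) + 2) ^ q)⁻¹ - (((n : ℝ) + 1) ^ q)⁻¹))
      = fun n : ℕ => ∫ t in (0:ℝ)..1, (((n:ℝ)+1+t) ^ (q+1))⁻¹ := by
    funext n
    have hq0 : (0:ℝ) < (q:ℝ) := by exact_mod_cast (by omega : 0 < q)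
    have hG : ∀ x ∈ Set.uIcc (0:ℝ) 1,
        HasDerivAt (fun t : ℝ => -(1/(q:ℝ)) * (((n:ℝ)+1+t) ^ q)⁻¹)
          ((((n:ℝ)+1+x) ^ (q+1))⁻¹) x := by
      intro x hx
      have hq1 : q - 1 + 1 = q := by omega
      have h2 := hasDerivAt_inv_pow n (q-1) hx
      rw [hq1] at h2
      have h3 := h2.const_mul (-(1/(q:ℝ)))
      refine h3.congr_deriv (Eq.symm ?_)
      have hx0 : (0:ℝ) < (n:ℝ)+1+x := den_pos n hx
      have hcast : (((q - 1 : ℕ)) : ℝ) + 1 = (q : ℝ) := by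
        have h1q : (1:ℕ) ≤ q := by omega
        rw [Nat.cast_sub h1q]
        push_cast
        ring
      have he : q - 1 + 2 = q + 1 := by omega
      rw [he, hcast]
      have hqne : (q:ℝ) ≠ 0 := hq0.ne'
      have hXne : ((n:ℝ)+1+x) ^ (q+1) ≠ 0 := pow_ne_zero _ hx0.ne'
      field_simp
    have hInt : IntervalIntegrable (fun t : ℝ => (((n:ℝ)+1+t) ^ (q+1))⁻¹) volume 0 1 := by
      apply ContinuousOn.intervalIntegrable
      apply ContinuousOn.inv₀
      · fun_prop
      · intro t ht; exact pow_ne_zero _ (den_pos n ht).ne'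
    rw [intervalIntegral.integral_eq_sub_of_hasDerivAt hG hInt]
    rw [show ((n:ℝ)+1+1) = (n:ℝ)+2 by ring, show ((n:ℝ)+1+0) = (n:ℝ)+1 by ring]
    ring
  rw [e] at h
  have h2 : (-(1/(q:ℝ))) * (-1) = 1/(q:ℝ) := by ring
  rw [h2] at h
  exact h

/-- The enveloping remainder as a sum of integrals of constant sign. -/
lemma remainder_hasSum (q : ℕ) (hq : 2 ≤ q) :
    HasSum (fun n : ℕ => ∫ t in (0:ℝ)..1,
        (((bernoulli q : ℚ) : ℝ) - bernoulliFun q t) / (((n:ℝ)+1+t) ^ (q+1)))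
      (((bernoulli q : ℚ) : ℝ) / (q : ℝ) - J q) := by
  have hw := (hasSum_w q hq).mul_left ((bernoulli q : ℚ) : ℝ)
  have hJ := hasSum_J q (by omega)
  have h := hw.sub hJ
  have e : (fun n : ℕ => ((bernoulli q : ℚ) : ℝ) *
        (∫ t in (0:ℝ)..1, (((n:ℝ)+1+t) ^ (q+1))⁻¹) - aInt q n)
      = fun n : ℕ => ∫ t in (0:ℝ)..1,
        (((bernoulli q : ℚ) : ℝ) - bernoulliFun q t) / (((n:ℝ)+1+t) ^ (q+1)) := by
    funext n
    have hInt1 : IntervalIntegrable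
        (fun t : ℝ => ((bernoulli q : ℚ) : ℝ) * (((n:ℝ)+1+t) ^ (q+1))⁻¹) volume 0 1 := by
      apply ContinuousOn.intervalIntegrable
      apply ContinuousOn.mul continuousOn_const
      apply ContinuousOn.inv₀
      · fun_prop
      · intro t ht; exact pow_ne_zero _ (den_pos n ht).ne'
    have hInt2 := intInt q (q+1) n
    rw [aInt, ← intervalIntegral.integral_const_mul,
      ← intervalIntegral.integral_sub hInt1 hInt2]
    apply intervalIntegral.integral_congr
    intro x _
    show ((bernoulli q : ℚ) : ℝ) * (((n:ℝ)+1+x) ^ (q+1))⁻¹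
        - bernoulliFun q x / ((n:ℝ)+1+x) ^ (q+1)
      = (((bernoulli q : ℚ) : ℝ) - bernoulliFun q x) / (((n:ℝ)+1+x) ^ (q+1))
    simp only [sub_div, div_eq_mul_inv]
    ring
  rw [e] at h
  have h2 : ((bernoulli q : ℚ) : ℝ) * (1/(q:ℝ)) = ((bernoulli q : ℚ) : ℝ) / (q:ℝ) := by ring
  rw [h2] at h
  exact h

/-- strict sign of the remainder -/
lemma remainder_pos (N : ℕ) :
    0 < (-1:ℝ)^N * (((bernoulli (2*(N+1)) : ℚ) : ℝ) / ((2*(N+1) : ℕ) : ℝ) - J (2*(N+1))) := by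
  set q := 2*(N+1) with hqdef
  have hq : 2 ≤ q := by omega
  have H := (remainder_hasSum q hq).mul_left ((-1:ℝ)^N)
  have hpos : ∀ n : ℕ, 0 < (-1:ℝ)^N * ∫ t in (0:ℝ)..1,
      (((bernoulli q : ℚ) : ℝ) - bernoulliFun q t) / (((n:ℝ)+1+t) ^ (q+1)) := by
    intro n
    rw [← intervalIntegral.integral_const_mul]
    apply intervalIntegral.intervalIntegral_pos_of_pos_on
    · apply ContinuousOn.intervalIntegrable
      apply ContinuousOn.mul continuousOn_const
      apply ContinuousOn.div
      · apply ContinuousOn.sub continuousOn_const (continuous_bernoulliFun q).continuousOn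
      · fun_prop
      · intro t ht; exact pow_ne_zero _ (den_pos n ht).ne'
    · intro x hxI
      have hxu : x ∈ Set.uIcc (0:ℝ) 1 := by
        rw [Set.uIcc_of_le (by norm_num : (0:ℝ) ≤ 1)]
        exact ⟨hxI.1.le, hxI.2.le⟩
      have hX : (0:ℝ) < ((n:ℝ)+1+x) ^ (q+1) := pow_pos (den_pos n hxu) _
      have hsgn := sign_bernoulli_sub (N+1) (by omega) hxI
      have hpow : (-1:ℝ)^(N+1+1) = (-1:ℝ)^N := by
        rw [pow_succ, pow_succ]
        ring
      rw [hpow, bernoulliFun_eval_zero] at hsgn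
      have hq2 : 2*(N+1) = q := rfl
      rw [hq2] at hsgn
      have : (-1:ℝ)^N * ((((bernoulli q : ℚ) : ℝ) - bernoulliFun q x) / (((n:ℝ)+1+x) ^ (q+1)))
          = ((-1:ℝ)^N * (((bernoulli q : ℚ) : ℝ) - bernoulliFun q x)) / (((n:ℝ)+1+x) ^ (q+1)) := by
        ring
      rw [this]
      exact div_pos hsgn hX
    · norm_num
  exact hasSum_lt (fun n => (hpos n).le) (hpos 0) hasSum_zero H

noncomputable def S (M : ℕ) : ℝ :=
  1/2 + ∑ k ∈ Finset.Icc 1 M, ((bernoulli (2*k) : ℚ) : ℝ) / (2*(k:ℝ))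

noncomputable def R (M : ℕ) : ℝ := Real.eulerMascheroniConstant - S M

lemma gamma_eq (M : ℕ) : Real.eulerMascheroniConstant = S M + R M := by
  rw [R]; ring

lemma R_pos (M : ℕ) : 0 < (-1:ℝ)^M * R M := by
  have hexp := gamma_expansion M
  have hrec := J_rec (2*M+1) (by omega)
  have hrp := remainder_pos M
  have e1 : R M = -J (2*M+1) := by
    rw [R, S, hexp]; ring
  rw [e1, hrec]
  have e2 : 2*(M+1) = 2*M+1+1 := by ring
  rw [e2] at hrp
  have e3 : (((2*M+1+1 : ℕ)) : ℝ) = ((2*M+1 : ℕ) : ℝ) + 1 := by push_cast; ring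
  rw [e3] at hrp
  convert hrp using 1
  ring

lemma R_diff (M : ℕ) :
    R M - R (M+1) = ((bernoulli (2*M+2) : ℚ) : ℝ) / (2*(M:ℝ)+2) := by
  rw [R, R, S, S, Finset.sum_Icc_succ_top (by omega : 1 ≤ M+1)]
  have e : 2*(M+1) = 2*M+2 := by ring
  rw [e]
  push_cast
  ring

end EulerEnv

open EulerEnv in
/-- Stirling-type semi-convergent series for Euler's constant: for every `N ≥ 1`
there is `θ ∈ (0,1)` with `γ = (1/2)(1 + Σ_{k=1}^N B_{2k}/k + θ B_{2N+2}/(N+1))`. -/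
theorem euler_constant_enveloping_series (N : ℕ) (hN : 1 ≤ N) :
    ∃ θ : ℝ, θ ∈ Set.Ioo (0 : ℝ) 1 ∧
      Real.eulerMascheroniConstant =
        (1 / 2) * (1 + (∑ k ∈ Finset.Icc 1 N, ((bernoulli (2 * k) : ℚ) : ℝ) / k) +
          θ * ((bernoulli (2 * N + 2) : ℚ) : ℝ) / (N + 1)) := by
  have hRN := R_pos N
  have hRN1 := R_pos (N+1)
  have hdiff := R_diff N
  set b : ℝ := ((bernoulli (2*N+2) : ℚ) : ℝ) with hbdef
  have h2N2 : (0:ℝ) < 2*(N:ℝ)+2 := by positivity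
  have hpow1 : (-1:ℝ)^(N+1) = -(-1:ℝ)^N := by rw [pow_succ]; ring
  rw [hpow1] at hRN1
  have hbpos : 0 < (-1:ℝ)^N * b := by
    have h2 : 0 < (-1:ℝ)^N * (R N - R (N+1)) := by
      have e : (-1:ℝ)^N * (R N - R (N+1))
          = (-1:ℝ)^N * R N + -(-1:ℝ)^N * R (N+1) := by ring
      rw [e]
      linarith [hRN, hRN1]
    rw [hdiff] at h2
    have e2 : (-1:ℝ)^N * b = ((-1:ℝ)^N * (b / (2*(N:ℝ)+2))) * (2*(N:ℝ)+2) := by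
      field_simp
    rw [e2]
    exact mul_pos h2 h2N2
  have hbne : b ≠ 0 := by
    intro h
    rw [h, mul_zero] at hbpos
    exact lt_irrefl 0 hbpos
  set θ : ℝ := R N * (2*(N:ℝ)+2) / b with hθdef
  have hb_eq : b = (R N - R (N+1)) * (2*(N:ℝ)+2) := by
    rw [hdiff]
    field_simp
  have hθ1 : θ - 1 = R (N+1) * (2*(N:ℝ)+2) / b := by
    have e : θ - 1 = (R N * (2*(N:ℝ)+2) - b) / b := by
      rw [hθdef]
      field_simp
    rw [e]
    congr 1
    linear_combination -hb_eq
  have hθpos : 0 < θ := by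
    rcases Nat.even_or_odd N with he | ho
    · have hp : (-1:ℝ)^N = 1 := he.neg_one_pow
      rw [hp] at hRN hRN1 hbpos
      rw [one_mul] at hRN hbpos
      exact div_pos (mul_pos hRN h2N2) hbpos
    · have hp : (-1:ℝ)^N = -1 := ho.neg_one_pow
      rw [hp] at hRN hRN1 hbpos
      have hRN' : R N < 0 := by linarith
      have hb' : b < 0 := by linarith
      exact div_pos_of_neg_of_neg (mul_neg_of_neg_of_pos hRN' h2N2) hb'
  have hθlt : θ < 1 := by
    have : θ - 1 < 0 := by
      rw [hθ1]
      rcases Nat.even_or_odd N with he | ho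
      · have hp : (-1:ℝ)^N = 1 := he.neg_one_pow
        rw [hp] at hRN1 hbpos
        have hRN1' : R (N+1) < 0 := by linarith
        have hb' : 0 < b := by linarith
        exact div_neg_of_neg_of_pos (mul_neg_of_neg_of_pos hRN1' h2N2) hb'
      · have hp : (-1:ℝ)^N = -1 := ho.neg_one_pow
        rw [hp] at hRN1 hbpos
        have hRN1' : 0 < R (N+1) := by linarith
        have hb' : b < 0 := by linarith
        exact div_neg_of_pos_of_neg (mul_pos hRN1' h2N2) hb'
    linarith
  refine ⟨θ, ⟨hθpos, hθlt⟩, ?_⟩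
  have hγR := gamma_eq N
  have hθb : θ * b = R N * (2*(N:ℝ)+2) := by
    rw [hθdef]
    field_simp
  have hsum2 : (∑ k ∈ Finset.Icc 1 N, ((bernoulli (2*k) : ℚ) : ℝ) / (2*(k:ℝ)))
      = 1/2 * ∑ k ∈ Finset.Icc 1 N, ((bernoulli (2*k) : ℚ) : ℝ) / (k:ℝ) := by
    rw [Finset.mul_sum]
    apply Finset.sum_congr rfl
    intro k hk
    have hk1 : 1 ≤ k := (Finset.mem_Icc.mp hk).1
    have hkne : (k:ℝ) ≠ 0 := by
      exact_mod_cast Nat.one_le_iff_ne_zero.mp hk1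
    field_simp
  have hN1 : ((N:ℝ)+1) ≠ 0 := by positivity
  have hdiv : θ * b / ((N:ℝ)+1) = 2 * R N := by
    rw [hθb]
    field_simp
  rw [hγR, S, hsum2, hdiv]
  ring
end

section
/- For all integers n and k with 1 ≤ k ≤ n, the unsigned Stirling numbers of the first kind satisfy the upper bound |S₁(n,k)| ≤ n! / ( (1 − e^{−1})^n · k! ). -/
open Finset Filter Real

lemma S1_rec (n k : ℕ) : S1 (n+1) (k+1) = S1 n k + n * S1 n (k+1) := by
  unfold S1
  rw [ascPochhammer_succ_right, mul_add, Polynomial.coeff_add, Polynomial.coeff_mul_X,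
    ← Polynomial.C_eq_natCast, Polynomial.coeff_mul_C]
  push_cast
  ring

lemma S1_zero_right (m : ℕ) (hm : m ≠ 0) : S1 m 0 = 0 := by
  unfold S1
  rw [Polynomial.coeff_zero_eq_eval_zero, ascPochhammer_eval_zero, if_neg hm]

/-- `c k m = S1 m k * k! / m!`, the coefficients of the EGF of Stirling numbers. -/
noncomputable def c (k m : ℕ) : ℝ := (S1 m k : ℝ) * (Nat.factorial k : ℝ) / (Nat.factorial m : ℝ)

lemma c_nonneg (k m : ℕ) : 0 ≤ c k m := by
  unfold c; positivity

lemma c_rec (k m : ℕ) :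
    ((m : ℝ) + 1) * c (k+1) (m+1) = ((k : ℝ)+1) * c k m + (m : ℝ) * c (k+1) m := by
  unfold c
  rw [S1_rec]
  have hm : (Nat.factorial (m+1) : ℝ) = ((m : ℝ)+1) * (Nat.factorial m : ℝ) := by
    rw [Nat.factorial_succ]; push_cast; ring
  have hk : (Nat.factorial (k+1) : ℝ) = ((k : ℝ)+1) * (Nat.factorial k : ℝ) := by
    rw [Nat.factorial_succ]; push_cast; ring
  have hm0 : (Nat.factorial m : ℝ) ≠ 0 := by positivity
  have hm1 : ((m : ℝ) + 1) ≠ 0 := by positivity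
  rw [hm, hk]
  field_simp
  push_cast
  ring

/-- Partial sums of the EGF. -/
noncomputable def P (k N : ℕ) (z : ℝ) : ℝ := ∑ m ∈ Finset.range (N+1), c k m * z^m

lemma P_hasDeriv (k N : ℕ) (z : ℝ) :
    HasDerivAt (P k N) (∑ m ∈ Finset.range (N+1), c k m * (m * z^(m-1))) z := by
  have := HasDerivAt.sum (u := Finset.range (N+1)) (A := fun m (y : ℝ) => c k m * y^m) (x := z)
    (fun m _ => (hasDerivAt_pow m z).const_mul (c k m))
  have hP : P k N = ∑ i ∈ Finset.range (N+1), fun (y : ℝ) => c k i * y^i := by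
    ext y; simp [P, Finset.sum_apply]
  rw [hP]; exact this

lemma E_bound (k N : ℕ) (t : ℝ) (ht : 0 ≤ t) :
    (1 - t) * (∑ m ∈ Finset.range (N+1), c (k+1) m * (m * t^(m-1)))
      ≤ ((k : ℝ)+1) * P k N t := by
  set E : ℝ := ∑ m ∈ Finset.range (N+1), c (k+1) m * (m * t^(m-1)) with hE
  have hE' : E = ∑ m ∈ Finset.range N, (((k : ℝ)+1) * c k m + (m : ℝ) * c (k+1) m) * t^m := by
    rw [hE, Finset.sum_range_succ']
    simp only [Nat.cast_zero, zero_mul, mul_zero, add_zero]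
    apply Finset.sum_congr rfl
    intro m _
    have : c (k+1) (m+1) * (((m : ℕ)+1 : ℕ) * t^((m+1)-1)) =
        (((m : ℝ)+1) * c (k+1) (m+1)) * t^m := by
      push_cast; ring
    rw [this, c_rec]
  have hA : ∑ m ∈ Finset.range N, (((k : ℝ)+1) * c k m) * t^m ≤ ((k : ℝ)+1) * P k N t := by
    unfold P
    rw [Finset.mul_sum]
    simp only [mul_assoc]
    apply Finset.sum_le_sum_of_subset_of_nonneg
    · exact Finset.range_subset_range.2 (Nat.le_succ N)
    · intro m _ _
      have := c_nonneg k m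
      positivity
  have hB : ∑ m ∈ Finset.range N, ((m : ℝ) * c (k+1) m) * t^m ≤ t * E := by
    have ht' : t * E = ∑ m ∈ Finset.range (N+1), ((m : ℝ) * c (k+1) m) * t^m := by
      rw [hE, Finset.mul_sum]
      apply Finset.sum_congr rfl
      intro m _
      cases m with
      | zero => simp
      | succ m => simp only [Nat.add_sub_cancel, pow_succ]; push_cast; ring
    rw [ht']
    apply Finset.sum_le_sum_of_subset_of_nonneg
    · exact Finset.range_subset_range.2 (Nat.le_succ N)
    · intro m _ _
      have := c_nonneg (k+1) m
      positivity
  have hsplit : E = (∑ m ∈ Finset.range N, (((k : ℝ)+1) * c k m) * t^m)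
      + (∑ m ∈ Finset.range N, ((m : ℝ) * c (k+1) m) * t^m) := by
    rw [hE', ← Finset.sum_add_distrib]
    apply Finset.sum_congr rfl
    intro m _; ring
  nlinarith [hA, hB, hsplit]

lemma L_hasDeriv (t : ℝ) (ht : t < 1) :
    HasDerivAt (fun u : ℝ => -Real.log (1 - u)) ((1 - t)⁻¹) t := by
  have h1 : HasDerivAt (fun u : ℝ => 1 - u) (-1) t := by
    simpa using (hasDerivAt_id t).const_sub 1
  have h2 : HasDerivAt Real.log ((1 - t)⁻¹) (1 - t) := Real.hasDerivAt_log (by linarith)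
  have h3 := (h2.comp t h1).neg
  exact h3.congr_deriv (by ring)

lemma P_le (k : ℕ) : ∀ N : ℕ, ∀ z : ℝ, 0 ≤ z → z < 1 →
    P k N z ≤ (-Real.log (1 - z))^k := by
  induction k with
  | zero =>
    intro N z hz hz1
    rw [pow_zero]
    unfold P
    rw [Finset.sum_eq_single 0]
    · simp [c, S1, ascPochhammer_zero]
    · intro m _ hm0
      simp [c, S1_zero_right m hm0]
    · intro h
      exact absurd (Finset.mem_range.2 (Nat.succ_pos N)) h
  | succ k ih =>
    intro N z hz hz1
    set L : ℝ → ℝ := fun u => -Real.log (1 - u) with hLdef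
    set h : ℝ → ℝ := fun u => L u ^ (k+1) - P (k+1) N u with hdef
    have hderiv : ∀ t ∈ Set.Icc (0:ℝ) z, HasDerivAt h
        (((k:ℝ)+1) * L t ^ k * (1-t)⁻¹
          - ∑ m ∈ Finset.range (N+1), c (k+1) m * (m * t^(m-1))) t := by
      intro t htt
      have ht1 : t < 1 := lt_of_le_of_lt htt.2 hz1
      have hLp : HasDerivAt (fun u => L u ^ (k+1))
          (((k:ℝ)+1) * L t ^ k * (1-t)⁻¹) t := by
        have := (L_hasDeriv t ht1).pow (k+1)
        exact this.congr_deriv (by simp [hLdef])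
      exact hLp.sub (P_hasDeriv (k+1) N t)
    have hmono : MonotoneOn h (Set.Icc 0 z) := by
      apply monotoneOn_of_deriv_nonneg (convex_Icc 0 z)
      · intro t htt
        exact (hderiv t htt).continuousAt.continuousWithinAt
      · intro t htt
        rw [interior_Icc] at htt
        exact (hderiv t (Set.mem_Icc_of_Ioo htt)).differentiableAt.differentiableWithinAt
      · intro t htt
        rw [interior_Icc] at htt
        have htt' := Set.mem_Icc_of_Ioo htt
        rw [(hderiv t htt').deriv]
        have ht0 : (0:ℝ) ≤ t := le_of_lt htt.1
        have ht1 : t < 1 := htt.2.trans hz1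
        have h1t : (0:ℝ) < 1 - t := by linarith
        have hEb := E_bound k N t ht0
        have hih := ih N t ht0 ht1
        have hPn : ((k:ℝ)+1) * P k N t ≤ ((k:ℝ)+1) * L t ^ k := by
          apply mul_le_mul_of_nonneg_left hih (by positivity)
        have : (1-t) * (∑ m ∈ Finset.range (N+1), c (k+1) m * (m * t^(m-1)))
            ≤ ((k:ℝ)+1) * L t ^ k := le_trans hEb hPn
        rw [sub_nonneg, mul_comm (((k:ℝ)+1) * L t ^ k) (1-t)⁻¹, ← div_eq_inv_mul,
          le_div_iff₀ h1t]
        linarith [this]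
    have h0z : h 0 ≤ h z := hmono (Set.left_mem_Icc.2 hz) (Set.right_mem_Icc.2 hz) hz
    have hh0 : h 0 = 0 := by
      have hL0 : L 0 = 0 := by simp [hLdef]
      have hP0 : P (k+1) N 0 = 0 := by
        unfold P
        rw [Finset.sum_eq_single 0]
        · have : S1 0 (k+1) = 0 := by
            unfold S1
            simp [ascPochhammer_zero, Polynomial.coeff_one]
          simp [c, this]
        · intro m _ hm0
          simp [zero_pow hm0]
        · intro hcon
          exact absurd (Finset.mem_range.2 (Nat.succ_pos N)) hcon
      simp [hdef, hL0, hP0]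
    have := hh0 ▸ h0z
    simpa [hdef, sub_nonneg] using this

/-- For `1 ≤ k ≤ n`, the unsigned Stirling numbers of the first kind satisfy
`|S₁(n,k)| ≤ n! / ((1 − e⁻¹)^n k!)`. -/
theorem stirling_upper_bound (n k : ℕ) (hk : 1 ≤ k) (hkn : k ≤ n) :
    (S1 n k : ℝ) ≤
      (Nat.factorial n : ℝ) / ((1 - Real.exp (-1)) ^ n * (Nat.factorial k : ℝ)) := by
  set x : ℝ := 1 - Real.exp (-1) with hxdef
  have he0 : (0:ℝ) < Real.exp (-1) := Real.exp_pos _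
  have he1 : Real.exp (-1) < 1 := by
    rw [Real.exp_lt_one_iff]; norm_num
  have hx0 : 0 < x := by rw [hxdef]; linarith
  have hx1 : x < 1 := by rw [hxdef]; linarith
  have hPle := P_le k n x hx0.le hx1
  have hLx : -Real.log (1 - x) = 1 := by
    have : (1 : ℝ) - x = Real.exp (-1) := by simp [hxdef]
    rw [this, Real.log_exp]; norm_num
  rw [hLx, one_pow] at hPle
  have hsingle : c k n * x^n ≤ P k n x := by
    unfold P
    apply Finset.single_le_sum (f := fun m => c k m * x^m)
    · intro m _
      have := c_nonneg k m
      positivity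
    · exact Finset.self_mem_range_succ n
  have hmain : c k n * x^n ≤ 1 := le_trans hsingle hPle
  have hfn : (0:ℝ) < (Nat.factorial n : ℝ) := by positivity
  have hfk : (0:ℝ) < (Nat.factorial k : ℝ) := by positivity
  have hxp : (0:ℝ) < x^n := by positivity
  rw [le_div_iff₀ (by positivity)]
  unfold c at hmain
  rw [div_mul_eq_mul_div, div_le_one hfn] at hmain
  nlinarith [hmain]
end
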